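/- arXiv:1809.02003 — 6 statements merged into one kernel-verified Lean document; each statement's English description precedes it below -/
import Mathlib

section
/- For every τ in the Siegel upper half-space ℍ₂ and every z ∈ ℂ², the following nine linear relations among squares of theta functions hold, where θᵢ denotes the theta constant θᵢ(0): θ₆²θ₁(z)² − θ₁²θ₆(z)² + θ₇²θ₁₃(z)² − θ₂²θ₁₄(z)² = 0; θ₆²θ₂(z)² − θ₂²θ₆(z)² − θ₁²θ₁₄(z)² + θ₇²θ₁₆(z)² = 0; θ₆²θ₃(z)² − θ₃²θ₆(z)² + θ₉²θ₁₃(z)² − θ₄²θ₁₄(z)² = 0; θ₆²θ₄(z)² − θ₄²θ₆(z)² − θ₃²θ₁₄(z)² + θ₉²θ₁₆(z)² = 0; θ₆²θ₅(z)² − θ₅²θ₆(z)² + θ₈²θ₁₃(z)² − θ₁₀²θ₁₆(z)² = 0; θ₇²θ₆(z)² − θ₆²θ₇(z)² − θ₁²θ₁₃(z)² + θ₂²θ₁₆(z)² = 0; θ₈²θ₆(z)² − θ₆²θ₈(z)² − θ₅²θ₁₃(z)² + θ₁₀²θ₁₄(z)² = 0; θ₉²θ₆(z)² − θ₆²θ₉(z)²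 − θ₃²θ₁₃(z)² + θ₄²θ₁₆(z)² = 0; θ₁₀²θ₆(z)² − θ₆²θ₁₀(z)² + θ₈²θ₁₄(z)² − θ₅²θ₁₆(z)² = 0. -/
open scoped BigOperators

/-- Genus-two theta function with characteristic vectors `a`, `b`. -/
noncomputable def thetaFn (a b : Fin 2 → ℝ) (z : Fin 2 → ℂ) (τ : Matrix (Fin 2) (Fin 2) ℂ) : ℂ :=
  ∑' u : Fin 2 → ℤ,
    Complex.exp ((Real.pi : ℂ) * Complex.I *
      ((∑ i, ∑ j, ((u i : ℂ) + (a i : ℂ)) * τ i j * ((u j : ℂ) + (a j : ℂ))) +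
        2 * ∑ i, ((u i : ℂ) + (a i : ℂ)) * (z i + (b i : ℂ))))

/-- The sixteen theta characteristics `[(a₁,a₂);(b₁,b₂)]`, 0-indexed: entry `i` is θ_{i+1}. -/
def thetaChars : Fin 16 → (ℝ × ℝ) × (ℝ × ℝ) :=
  ![((0,0),(0,0)), ((0,0),(1,1)), ((0,0),(1,0)), ((0,0),(0,1)),
    ((1,0),(0,0)), ((1,0),(0,1)), ((0,1),(0,0)), ((1,1),(0,0)),
    ((0,1),(1,0)), ((1,1),(1,1)), ((0,1),(0,1)), ((0,1),(1,1)),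
    ((1,1),(0,1)), ((1,0),(1,0)), ((1,0),(1,1)), ((1,1),(1,0))]

/-- `th i z τ` is the theta function θ_{i+1}(z, τ). -/
noncomputable def th (i : Fin 16) (z : Fin 2 → ℂ) (τ : Matrix (Fin 2) (Fin 2) ℂ) : ℂ :=
  thetaFn ![(thetaChars i).1.1 / 2, (thetaChars i).1.2 / 2]
          ![(thetaChars i).2.1 / 2, (thetaChars i).2.2 / 2] z τ

/-- Membership in the Siegel upper half-space ℍ₂. -/
def IsSiegel (τ : Matrix (Fin 2) (Fin 2) ℂ) : Prop :=
  τ 0 1 = τ 1 0 ∧ 0 < (τ 1 1).im ∧ (τ 0 1).im ^ 2 < (τ 0 0).im * (τ 1 1).im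


open Complex

noncomputable def tt (a b : Fin 2 → ℝ) (z : Fin 2 → ℂ) (τ : Matrix (Fin 2) (Fin 2) ℂ)
    (u : Fin 2 → ℤ) : ℂ :=
  Complex.exp ((Real.pi : ℂ) * Complex.I *
    ((∑ i, ∑ j, ((u i : ℂ) + (a i : ℂ)) * τ i j * ((u j : ℂ) + (a j : ℂ))) +
      2 * ∑ i, ((u i : ℂ) + (a i : ℂ)) * (z i + (b i : ℂ))))

lemma thetaFn_eq (a b : Fin 2 → ℝ) (z : Fin 2 → ℂ) (τ : Matrix (Fin 2) (Fin 2) ℂ) :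
    thetaFn a b z τ = ∑' u, tt a b z τ u := rfl

lemma norm_tt (a b : Fin 2 → ℝ) (z : Fin 2 → ℂ) (τ : Matrix (Fin 2) (Fin 2) ℂ)
    (u : Fin 2 → ℤ) :
    ‖tt a b z τ u‖ = Real.exp (-Real.pi *
      (((u 0 : ℝ) + a 0) ^ 2 * (τ 0 0).im
        + ((u 0 : ℝ) + a 0) * ((u 1 : ℝ) + a 1) * ((τ 0 1).im + (τ 1 0).im)
        + ((u 1 : ℝ) + a 1) ^ 2 * (τ 1 1).im
        + 2 * (((u 0 : ℝ) + a 0) * (z 0).im + ((u 1 : ℝ) + a 1) * (z 1).im))) := by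
  rw [tt, Complex.norm_exp]
  congr 1
  simp only [Fin.sum_univ_two, Complex.mul_re, Complex.mul_im, Complex.add_re, Complex.add_im,
    Complex.I_re, Complex.I_im, Complex.ofReal_re, Complex.ofReal_im, Complex.intCast_re,
    Complex.intCast_im, Complex.re_ofNat, Complex.im_ofNat]
  ring

open Real in
lemma summable_gauss (c : ℝ) (hc : 0 < c) (α y : ℝ) :
    Summable (fun n : ℤ => rexp (-π * (c * ((n : ℝ) + α) ^ 2 + 2 * ((n : ℝ) + α) * y))) := by
  have h1 : Summable (fun n : ℤ => jacobiTheta₂_term n ((c * α + y : ℝ) * I) ((c : ℝ) * I)) :=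
    (summable_jacobiTheta₂_term_iff _ _).mpr (by simpa using hc)
  have h2 : Summable (fun n : ℤ => ‖jacobiTheta₂_term n ((c * α + y : ℝ) * I) ((c : ℝ) * I)‖) :=
    summable_norm_iff.mpr h1
  have h3 := h2.mul_left (rexp (-π * (c * α ^ 2 + 2 * α * y)))
  refine h3.congr fun n => ?_
  rw [norm_jacobiTheta₂_term, ← Real.exp_add]
  congr 1
  simp only [Complex.mul_im, Complex.ofReal_re, Complex.ofReal_im, Complex.I_re, Complex.I_im]
  ring

set_option maxHeartbeats 1000000 in
lemma summable_tt {τ : Matrix (Fin 2) (Fin 2) ℂ} (hτ : IsSiegel τ) (a b : Fin 2 → ℝ)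
    (z : Fin 2 → ℂ) : Summable (tt a b z τ) := by
  obtain ⟨hsym, h11, hdet⟩ := hτ
  set M00 := (τ 0 0).im with hM00
  set M01 := (τ 0 1).im with hM01
  set M11 := (τ 1 1).im with hM11
  have h00 : 0 < M00 := by nlinarith [sq_nonneg M01]
  have hD : 0 < M00 * M11 - M01 ^ 2 := by nlinarith
  have hS : 0 < M00 + M11 := by linarith
  set c := (M00 * M11 - M01 ^ 2) / (M00 + M11) with hc
  have hcpos : 0 < c := div_pos hD hS
  have hQF : ∀ r0 r1 : ℝ, c * (r0 ^ 2 + r1 ^ 2) ≤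
      M00 * r0 ^ 2 + 2 * M01 * r0 * r1 + M11 * r1 ^ 2 := by
    intro r0 r1
    rw [hc, div_mul_eq_mul_div, div_le_iff₀ hS]
    nlinarith [sq_nonneg (M00 * r0 + M01 * r1), sq_nonneg (M01 * r0 + M11 * r1)]
  have hf := summable_gauss c hcpos (a 0) (z 0).im
  have hg := summable_gauss c hcpos (a 1) (z 1).im
  have hprod := hf.mul_of_nonneg hg (fun _ => Real.exp_nonneg _) (fun _ => Real.exp_nonneg _)
  have hpi : Summable (fun u : Fin 2 → ℤ =>
      Real.exp (-Real.pi * (c * ((u 0 : ℝ) + a 0) ^ 2 + 2 * ((u 0 : ℝ) + a 0) * (z 0).im))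
      * Real.exp (-Real.pi * (c * ((u 1 : ℝ) + a 1) ^ 2 + 2 * ((u 1 : ℝ) + a 1) * (z 1).im))) :=
    (Equiv.summable_iff (finTwoArrowEquiv ℤ)).mpr hprod
  have hnorm : Summable (fun u : Fin 2 → ℤ => ‖tt a b z τ u‖) := by
    refine Summable.of_nonneg_of_le (fun _ => norm_nonneg _) (fun u => ?_) hpi
    rw [norm_tt, ← Real.exp_add]
    refine Real.exp_le_exp.mpr ?_
    have hsymim : (τ 1 0).im = M01 := by rw [hM01, hsym]
    rw [hsymim]
    have h1 := hQF ((u 0 : ℝ) + a 0) ((u 1 : ℝ) + a 1)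
    have h2 := mul_le_mul_of_nonpos_left h1 (neg_nonpos.mpr Real.pi_pos.le)
    rw [← hM00, ← hM11]
    linarith [h2]
  exact hnorm.of_norm

/-- Coordinatewise change of variables `(δ,p,q) ↦ (p+q+δ, p−q)`. -/
def cov : (Fin 2 × ℤ × ℤ) ≃ ℤ × ℤ where
  toFun x := (x.2.1 + x.2.2 + (x.1 : ℕ), x.2.1 - x.2.2)
  invFun y := (if (y.1 + y.2) % 2 = 0 then 0 else 1,
    (y.1 + y.2 - (y.1 + y.2) % 2) / 2, (y.1 - y.2 - (y.1 + y.2) % 2) / 2)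
  left_inv := by
    rintro ⟨δ, p, q⟩
    fin_cases δ <;> simp only [Fin.val_zero, Fin.val_one, Nat.cast_zero, Nat.cast_one] <;>
      refine Prod.ext ?_ (Prod.ext ?_ ?_) <;> simp only [] <;>
      first
        | (rw [if_pos (by omega)]; rfl)
        | (rw [if_neg (by omega)]; rfl)
        | omega
  right_inv := by
    rintro ⟨u, v⟩
    by_cases h : (u + v) % 2 = 0 <;>
      simp only [h, if_pos, if_neg, if_true, if_false, reduceIte, Fin.val_zero, Fin.val_one,
        Nat.cast_zero, Nat.cast_one] <;>
      refine Prod.ext ?_ ?_ <;> simp only [] <;> omega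

/-- The global change of variables. -/
def bigE : ((Fin 2 → Fin 2) × ((Fin 2 → ℤ) × (Fin 2 → ℤ))) ≃ ((Fin 2 → ℤ) × (Fin 2 → ℤ)) :=
  (((Equiv.refl (Fin 2 → Fin 2)).prodCongr
      (Equiv.arrowProdEquivProdArrow (Fin 2) (fun _ => ℤ) (fun _ => ℤ)).symm).trans
    ((Equiv.arrowProdEquivProdArrow (Fin 2) (fun _ => Fin 2) (fun _ => ℤ × ℤ)).symm.trans
      ((Equiv.piCongrRight fun _ => cov).trans
        (Equiv.arrowProdEquivProdArrow (Fin 2) (fun _ => ℤ) (fun _ => ℤ)))))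

lemma bigE_apply (δ : Fin 2 → Fin 2) (p q : Fin 2 → ℤ) :
    bigE (δ, p, q) = (fun i => p i + q i + ((δ i : ℕ) : ℤ), fun i => p i - q i) := rfl


lemma thetaFn_shift (a b : Fin 2 → ℝ) (z : Fin 2 → ℂ) (τ : Matrix (Fin 2) (Fin 2) ℂ)
    (n : Fin 2 → ℤ) :
    thetaFn (fun i => a i + (n i : ℝ)) b z τ = thetaFn a b z τ := by
  rw [thetaFn_eq, thetaFn_eq, ← (Equiv.addRight n).tsum_eq (tt a b z τ)]
  refine tsum_congr fun u => ?_
  unfold tt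
  congr 1
  simp only [Equiv.coe_addRight, Fin.sum_univ_two, Pi.add_apply]
  push_cast
  ring

lemma exp_pi_I_nat (n : ℕ) : Complex.exp ((Real.pi : ℂ) * Complex.I * n) = (-1 : ℂ) ^ n := by
  induction n with
  | zero => simp
  | succ k ih =>
    rw [pow_succ, ← ih, Nat.cast_succ, mul_add, mul_one, Complex.exp_add, Complex.exp_pi_mul_I]

/-- Second-order theta functions. -/
noncomputable def Yc (τ : Matrix (Fin 2) (Fin 2) ℂ) (β : Fin 2 → Fin 2) (w : Fin 2 → ℂ) : ℂ :=
  thetaFn (fun i => ((β i : ℕ) : ℝ) / 2) 0 (fun i => 2 * w i) (fun i j => 2 * τ i j)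

lemma isSiegel_two {τ : Matrix (Fin 2) (Fin 2) ℂ} (hτ : IsSiegel τ) :
    IsSiegel (fun i j => 2 * τ i j) := by
  obtain ⟨h1, h2, h3⟩ := hτ
  refine ⟨?_, ?_, ?_⟩
  · show 2 * τ 0 1 = 2 * τ 1 0
    rw [h1]
  · show 0 < (2 * τ 1 1).im
    simp only [Complex.mul_im, Complex.re_ofNat, Complex.im_ofNat, zero_mul, add_zero]
    linarith
  · show (2 * τ 0 1).im ^ 2 < (2 * τ 0 0).im * (2 * τ 1 1).im
    simp only [Complex.mul_im, Complex.re_ofNat, Complex.im_ofNat, zero_mul, add_zero]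
    nlinarith

set_option maxHeartbeats 1600000 in
theorem theta_sq (τ : Matrix (Fin 2) (Fin 2) ℂ) (hτ : IsSiegel τ) (α μ : Fin 2 → Fin 2)
    (w : Fin 2 → ℂ) :
    thetaFn (fun i => ((α i : ℕ) : ℝ) / 2) (fun i => ((μ i : ℕ) : ℝ) / 2) w τ ^ 2 =
    ∑ δ : Fin 2 → Fin 2, ((-1 : ℂ) ^ (∑ i, ((δ i : ℕ) + (α i : ℕ)) * (μ i : ℕ)) *
      (Yc τ (δ + α) w * Yc τ δ 0)) := by
  have hτ2 := isSiegel_two hτ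
  have hS := summable_tt hτ (fun i => ((α i : ℕ) : ℝ) / 2) (fun i => ((μ i : ℕ) : ℝ) / 2) w
  have hN := summable_norm_iff.mpr hS
  rw [sq, thetaFn_eq, tsum_mul_tsum_of_summable_norm hN hN, ← bigE.tsum_eq]
  have hSE : Summable fun x : (Fin 2 → Fin 2) × ((Fin 2 → ℤ) × (Fin 2 → ℤ)) =>
      tt (fun i => ((α i : ℕ) : ℝ) / 2) (fun i => ((μ i : ℕ) : ℝ) / 2) w τ (bigE x).1 *
      tt (fun i => ((α i : ℕ) : ℝ) / 2) (fun i => ((μ i : ℕ) : ℝ) / 2) w τ (bigE x).2 :=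
    bigE.summable_iff.mpr (summable_mul_of_summable_norm hN hN)
  rw [hSE.tsum_prod, tsum_fintype]
  refine Finset.sum_congr rfl fun δ _ => ?_
  have key : ∀ pq : (Fin 2 → ℤ) × (Fin 2 → ℤ),
      tt (fun i => ((α i : ℕ) : ℝ) / 2) (fun i => ((μ i : ℕ) : ℝ) / 2) w τ (bigE (δ, pq)).1 *
      tt (fun i => ((α i : ℕ) : ℝ) / 2) (fun i => ((μ i : ℕ) : ℝ) / 2) w τ (bigE (δ, pq)).2 =
      Complex.exp ((Real.pi : ℂ) * Complex.I *
          ((∑ i, ((δ i : ℕ) + (α i : ℕ)) * (μ i : ℕ) : ℕ) : ℂ)) *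
        (tt (fun i => ((α i : ℕ) : ℝ) / 2 + ((δ i : ℕ) : ℝ) / 2) 0 (fun i => 2 * w i)
            (fun i j => 2 * τ i j) pq.1 *
         tt (fun i => ((δ i : ℕ) : ℝ) / 2) 0 (fun i => 2 * (0 : Fin 2 → ℂ) i)
            (fun i j => 2 * τ i j) pq.2) := by
    rintro ⟨p, q⟩
    rw [bigE_apply]
    simp only [tt]
    rw [← Complex.exp_add, ← Complex.exp_add, ← Complex.exp_add,
      Complex.exp_eq_exp_iff_exists_int]
    refine ⟨p 0 * ((μ 0 : ℕ) : ℤ) + p 1 * ((μ 1 : ℕ) : ℤ), ?_⟩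
    simp only [Fin.sum_univ_two, Pi.zero_apply]
    push_cast
    ring
  rw [tsum_congr key]
  have hY1 := summable_norm_iff.mpr
    (summable_tt hτ2 (fun i => ((α i : ℕ) : ℝ) / 2 + ((δ i : ℕ) : ℝ) / 2) 0 (fun i => 2 * w i))
  have hY2 := summable_norm_iff.mpr
    (summable_tt hτ2 (fun i => ((δ i : ℕ) : ℝ) / 2) 0 (fun i => 2 * (0 : Fin 2 → ℂ) i))
  rw [tsum_mul_left, ← tsum_mul_tsum_of_summable_norm hY1 hY2, exp_pi_I_nat]
  congr 1
  change thetaFn _ _ _ _ * thetaFn _ _ _ _ = _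
  congr 1
  · -- thetaFn (α/2 + δ/2) ... = Yc τ (δ + α) w
    rw [Yc, ← thetaFn_shift (fun i => (((δ + α) i : ℕ) : ℝ) / 2) 0 (fun i => 2 * w i)
      (fun i j => 2 * τ i j) (fun i => ((δ i : ℕ) * (α i : ℕ) : ℤ))]
    congr 1
    funext i
    have h2 : ∀ s t : Fin 2, (s : ℕ) + (t : ℕ) = ((s + t : Fin 2) : ℕ) + 2 * ((s : ℕ) * (t : ℕ)) := by
      decide
    have := h2 (δ i) (α i)
    have hpi : ((δ + α) i : ℕ) = ((δ i + α i : Fin 2) : ℕ) := rfl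
    rw [hpi]
    have hr : ((δ i : ℕ) : ℝ) + ((α i : ℕ) : ℝ) =
        (((δ i + α i : Fin 2) : ℕ) : ℝ) + 2 * (((δ i : ℕ) : ℝ) * ((α i : ℕ) : ℝ)) := by
      exact_mod_cast congrArg (fun n : ℕ => (n : ℝ)) this
    push_cast
    linarith

lemma sum4 (f : (Fin 2 → Fin 2) → ℂ) :
    ∑ δ : Fin 2 → Fin 2, f δ = f ![0, 0] + f ![0, 1] + f ![1, 0] + f ![1, 1] := by
  rw [← (finTwoArrowEquiv (Fin 2)).symm.sum_comp f, Fintype.sum_prod_type]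
  simp [Fin.sum_univ_two, finTwoArrowEquiv]
  ring


lemma th0_sq (τ : Matrix (Fin 2) (Fin 2) ℂ) (hτ : IsSiegel τ) (w : Fin 2 → ℂ) :
    th 0 w τ ^ 2 = Yc τ ![0, 0] w * Yc τ ![0, 0] 0 + Yc τ ![0, 1] w * Yc τ ![0, 1] 0 + Yc τ ![1, 0] w * Yc τ ![1, 0] 0 + Yc τ ![1, 1] w * Yc τ ![1, 1] 0 := by
  have h := theta_sq τ hτ ![0, 0] ![0, 0] w
  rw [sum4] at h
  have hth : th 0 w τ = thetaFn (fun j => (((![0, 0] : Fin 2 → Fin 2) j : ℕ) : ℝ) / 2)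
      (fun j => (((![0, 0] : Fin 2 → Fin 2) j : ℕ) : ℝ) / 2) w τ := by
    unfold th
    rw [show thetaChars 0 = ((0, 0), (0, 0)) from rfl]
    congr 1 <;> funext j <;> fin_cases j <;> norm_num
  rw [hth, h]
  norm_num [Matrix.vec2_add, Fin.sum_univ_two,
    show (0 + 0 : Fin 2) = 0 from rfl, show (0 + 1 : Fin 2) = 1 from rfl,
    show (1 + 0 : Fin 2) = 1 from rfl, show (1 + 1 : Fin 2) = 0 from rfl]
  try ring

lemma th1_sq (τ : Matrix (Fin 2) (Fin 2) ℂ) (hτ : IsSiegel τ) (w : Fin 2 → ℂ) :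
    th 1 w τ ^ 2 = Yc τ ![0, 0] w * Yc τ ![0, 0] 0 - Yc τ ![0, 1] w * Yc τ ![0, 1] 0 - Yc τ ![1, 0] w * Yc τ ![1, 0] 0 + Yc τ ![1, 1] w * Yc τ ![1, 1] 0 := by
  have h := theta_sq τ hτ ![0, 0] ![1, 1] w
  rw [sum4] at h
  have hth : th 1 w τ = thetaFn (fun j => (((![0, 0] : Fin 2 → Fin 2) j : ℕ) : ℝ) / 2)
      (fun j => (((![1, 1] : Fin 2 → Fin 2) j : ℕ) : ℝ) / 2) w τ := by
    unfold th
    rw [show thetaChars 1 = ((0, 0), (1, 1)) from rfl]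
    congr 1 <;> funext j <;> fin_cases j <;> norm_num
  rw [hth, h]
  norm_num [Matrix.vec2_add, Fin.sum_univ_two,
    show (0 + 0 : Fin 2) = 0 from rfl, show (0 + 1 : Fin 2) = 1 from rfl,
    show (1 + 0 : Fin 2) = 1 from rfl, show (1 + 1 : Fin 2) = 0 from rfl]
  try ring

lemma th2_sq (τ : Matrix (Fin 2) (Fin 2) ℂ) (hτ : IsSiegel τ) (w : Fin 2 → ℂ) :
    th 2 w τ ^ 2 = Yc τ ![0, 0] w * Yc τ ![0, 0] 0 + Yc τ ![0, 1] w * Yc τ ![0, 1] 0 - Yc τ ![1, 0] w * Yc τ ![1, 0] 0 - Yc τ ![1, 1] w * Yc τ ![1, 1] 0 := by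
  have h := theta_sq τ hτ ![0, 0] ![1, 0] w
  rw [sum4] at h
  have hth : th 2 w τ = thetaFn (fun j => (((![0, 0] : Fin 2 → Fin 2) j : ℕ) : ℝ) / 2)
      (fun j => (((![1, 0] : Fin 2 → Fin 2) j : ℕ) : ℝ) / 2) w τ := by
    unfold th
    rw [show thetaChars 2 = ((0, 0), (1, 0)) from rfl]
    congr 1 <;> funext j <;> fin_cases j <;> norm_num
  rw [hth, h]
  norm_num [Matrix.vec2_add, Fin.sum_univ_two,
    show (0 + 0 : Fin 2) = 0 from rfl, show (0 + 1 : Fin 2) = 1 from rfl,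
    show (1 + 0 : Fin 2) = 1 from rfl, show (1 + 1 : Fin 2) = 0 from rfl]
  try ring

lemma th3_sq (τ : Matrix (Fin 2) (Fin 2) ℂ) (hτ : IsSiegel τ) (w : Fin 2 → ℂ) :
    th 3 w τ ^ 2 = Yc τ ![0, 0] w * Yc τ ![0, 0] 0 - Yc τ ![0, 1] w * Yc τ ![0, 1] 0 + Yc τ ![1, 0] w * Yc τ ![1, 0] 0 - Yc τ ![1, 1] w * Yc τ ![1, 1] 0 := by
  have h := theta_sq τ hτ ![0, 0] ![0, 1] w
  rw [sum4] at h
  have hth : th 3 w τ = thetaFn (fun j => (((![0, 0] : Fin 2 → Fin 2) j : ℕ) : ℝ) / 2)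
      (fun j => (((![0, 1] : Fin 2 → Fin 2) j : ℕ) : ℝ) / 2) w τ := by
    unfold th
    rw [show thetaChars 3 = ((0, 0), (0, 1)) from rfl]
    congr 1 <;> funext j <;> fin_cases j <;> norm_num
  rw [hth, h]
  norm_num [Matrix.vec2_add, Fin.sum_univ_two,
    show (0 + 0 : Fin 2) = 0 from rfl, show (0 + 1 : Fin 2) = 1 from rfl,
    show (1 + 0 : Fin 2) = 1 from rfl, show (1 + 1 : Fin 2) = 0 from rfl]
  try ring

lemma th4_sq (τ : Matrix (Fin 2) (Fin 2) ℂ) (hτ : IsSiegel τ) (w : Fin 2 → ℂ) :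
    th 4 w τ ^ 2 = Yc τ ![1, 0] w * Yc τ ![0, 0] 0 + Yc τ ![1, 1] w * Yc τ ![0, 1] 0 + Yc τ ![0, 0] w * Yc τ ![1, 0] 0 + Yc τ ![0, 1] w * Yc τ ![1, 1] 0 := by
  have h := theta_sq τ hτ ![1, 0] ![0, 0] w
  rw [sum4] at h
  have hth : th 4 w τ = thetaFn (fun j => (((![1, 0] : Fin 2 → Fin 2) j : ℕ) : ℝ) / 2)
      (fun j => (((![0, 0] : Fin 2 → Fin 2) j : ℕ) : ℝ) / 2) w τ := by
    unfold th
    rw [show thetaChars 4 = ((1, 0), (0, 0)) from rfl]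
    congr 1 <;> funext j <;> fin_cases j <;> norm_num
  rw [hth, h]
  norm_num [Matrix.vec2_add, Fin.sum_univ_two,
    show (0 + 0 : Fin 2) = 0 from rfl, show (0 + 1 : Fin 2) = 1 from rfl,
    show (1 + 0 : Fin 2) = 1 from rfl, show (1 + 1 : Fin 2) = 0 from rfl]
  try ring

lemma th5_sq (τ : Matrix (Fin 2) (Fin 2) ℂ) (hτ : IsSiegel τ) (w : Fin 2 → ℂ) :
    th 5 w τ ^ 2 = Yc τ ![1, 0] w * Yc τ ![0, 0] 0 - Yc τ ![1, 1] w * Yc τ ![0, 1] 0 + Yc τ ![0, 0] w * Yc τ ![1, 0] 0 - Yc τ ![0, 1] w * Yc τ ![1, 1] 0 := by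
  have h := theta_sq τ hτ ![1, 0] ![0, 1] w
  rw [sum4] at h
  have hth : th 5 w τ = thetaFn (fun j => (((![1, 0] : Fin 2 → Fin 2) j : ℕ) : ℝ) / 2)
      (fun j => (((![0, 1] : Fin 2 → Fin 2) j : ℕ) : ℝ) / 2) w τ := by
    unfold th
    rw [show thetaChars 5 = ((1, 0), (0, 1)) from rfl]
    congr 1 <;> funext j <;> fin_cases j <;> norm_num
  rw [hth, h]
  norm_num [Matrix.vec2_add, Fin.sum_univ_two,
    show (0 + 0 : Fin 2) = 0 from rfl, show (0 + 1 : Fin 2) = 1 from rfl,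
    show (1 + 0 : Fin 2) = 1 from rfl, show (1 + 1 : Fin 2) = 0 from rfl]
  try ring

lemma th6_sq (τ : Matrix (Fin 2) (Fin 2) ℂ) (hτ : IsSiegel τ) (w : Fin 2 → ℂ) :
    th 6 w τ ^ 2 = Yc τ ![0, 1] w * Yc τ ![0, 0] 0 + Yc τ ![0, 0] w * Yc τ ![0, 1] 0 + Yc τ ![1, 1] w * Yc τ ![1, 0] 0 + Yc τ ![1, 0] w * Yc τ ![1, 1] 0 := by
  have h := theta_sq τ hτ ![0, 1] ![0, 0] w
  rw [sum4] at h
  have hth : th 6 w τ = thetaFn (fun j => (((![0, 1] : Fin 2 → Fin 2) j : ℕ) : ℝ) / 2)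
      (fun j => (((![0, 0] : Fin 2 → Fin 2) j : ℕ) : ℝ) / 2) w τ := by
    unfold th
    rw [show thetaChars 6 = ((0, 1), (0, 0)) from rfl]
    congr 1 <;> funext j <;> fin_cases j <;> norm_num
  rw [hth, h]
  norm_num [Matrix.vec2_add, Fin.sum_univ_two,
    show (0 + 0 : Fin 2) = 0 from rfl, show (0 + 1 : Fin 2) = 1 from rfl,
    show (1 + 0 : Fin 2) = 1 from rfl, show (1 + 1 : Fin 2) = 0 from rfl]
  try ring

lemma th7_sq (τ : Matrix (Fin 2) (Fin 2) ℂ) (hτ : IsSiegel τ) (w : Fin 2 → ℂ) :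
    th 7 w τ ^ 2 = Yc τ ![1, 1] w * Yc τ ![0, 0] 0 + Yc τ ![1, 0] w * Yc τ ![0, 1] 0 + Yc τ ![0, 1] w * Yc τ ![1, 0] 0 + Yc τ ![0, 0] w * Yc τ ![1, 1] 0 := by
  have h := theta_sq τ hτ ![1, 1] ![0, 0] w
  rw [sum4] at h
  have hth : th 7 w τ = thetaFn (fun j => (((![1, 1] : Fin 2 → Fin 2) j : ℕ) : ℝ) / 2)
      (fun j => (((![0, 0] : Fin 2 → Fin 2) j : ℕ) : ℝ) / 2) w τ := by
    unfold th
    rw [show thetaChars 7 = ((1, 1), (0, 0)) from rfl]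
    congr 1 <;> funext j <;> fin_cases j <;> norm_num
  rw [hth, h]
  norm_num [Matrix.vec2_add, Fin.sum_univ_two,
    show (0 + 0 : Fin 2) = 0 from rfl, show (0 + 1 : Fin 2) = 1 from rfl,
    show (1 + 0 : Fin 2) = 1 from rfl, show (1 + 1 : Fin 2) = 0 from rfl]
  try ring

lemma th8_sq (τ : Matrix (Fin 2) (Fin 2) ℂ) (hτ : IsSiegel τ) (w : Fin 2 → ℂ) :
    th 8 w τ ^ 2 = Yc τ ![0, 1] w * Yc τ ![0, 0] 0 + Yc τ ![0, 0] w * Yc τ ![0, 1] 0 - Yc τ ![1, 1] w * Yc τ ![1, 0] 0 - Yc τ ![1, 0] w * Yc τ ![1, 1] 0 := by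
  have h := theta_sq τ hτ ![0, 1] ![1, 0] w
  rw [sum4] at h
  have hth : th 8 w τ = thetaFn (fun j => (((![0, 1] : Fin 2 → Fin 2) j : ℕ) : ℝ) / 2)
      (fun j => (((![1, 0] : Fin 2 → Fin 2) j : ℕ) : ℝ) / 2) w τ := by
    unfold th
    rw [show thetaChars 8 = ((0, 1), (1, 0)) from rfl]
    congr 1 <;> funext j <;> fin_cases j <;> norm_num
  rw [hth, h]
  norm_num [Matrix.vec2_add, Fin.sum_univ_two,
    show (0 + 0 : Fin 2) = 0 from rfl, show (0 + 1 : Fin 2) = 1 from rfl,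
    show (1 + 0 : Fin 2) = 1 from rfl, show (1 + 1 : Fin 2) = 0 from rfl]
  try ring

lemma th9_sq (τ : Matrix (Fin 2) (Fin 2) ℂ) (hτ : IsSiegel τ) (w : Fin 2 → ℂ) :
    th 9 w τ ^ 2 = Yc τ ![1, 1] w * Yc τ ![0, 0] 0 - Yc τ ![1, 0] w * Yc τ ![0, 1] 0 - Yc τ ![0, 1] w * Yc τ ![1, 0] 0 + Yc τ ![0, 0] w * Yc τ ![1, 1] 0 := by
  have h := theta_sq τ hτ ![1, 1] ![1, 1] w
  rw [sum4] at h
  have hth : th 9 w τ = thetaFn (fun j => (((![1, 1] : Fin 2 → Fin 2) j : ℕ) : ℝ) / 2)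
      (fun j => (((![1, 1] : Fin 2 → Fin 2) j : ℕ) : ℝ) / 2) w τ := by
    unfold th
    rw [show thetaChars 9 = ((1, 1), (1, 1)) from rfl]
    congr 1 <;> funext j <;> fin_cases j <;> norm_num
  rw [hth, h]
  norm_num [Matrix.vec2_add, Fin.sum_univ_two,
    show (0 + 0 : Fin 2) = 0 from rfl, show (0 + 1 : Fin 2) = 1 from rfl,
    show (1 + 0 : Fin 2) = 1 from rfl, show (1 + 1 : Fin 2) = 0 from rfl]
  try ring

lemma th12_sq (τ : Matrix (Fin 2) (Fin 2) ℂ) (hτ : IsSiegel τ) (w : Fin 2 → ℂ) :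
    th 12 w τ ^ 2 = -Yc τ ![1, 1] w * Yc τ ![0, 0] 0 + Yc τ ![1, 0] w * Yc τ ![0, 1] 0 - Yc τ ![0, 1] w * Yc τ ![1, 0] 0 + Yc τ ![0, 0] w * Yc τ ![1, 1] 0 := by
  have h := theta_sq τ hτ ![1, 1] ![0, 1] w
  rw [sum4] at h
  have hth : th 12 w τ = thetaFn (fun j => (((![1, 1] : Fin 2 → Fin 2) j : ℕ) : ℝ) / 2)
      (fun j => (((![0, 1] : Fin 2 → Fin 2) j : ℕ) : ℝ) / 2) w τ := by
    unfold th
    rw [show thetaChars 12 = ((1, 1), (0, 1)) from rfl]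
    congr 1 <;> funext j <;> fin_cases j <;> norm_num
  rw [hth, h]
  norm_num [Matrix.vec2_add, Fin.sum_univ_two,
    show (0 + 0 : Fin 2) = 0 from rfl, show (0 + 1 : Fin 2) = 1 from rfl,
    show (1 + 0 : Fin 2) = 1 from rfl, show (1 + 1 : Fin 2) = 0 from rfl]
  try ring

lemma th13_sq (τ : Matrix (Fin 2) (Fin 2) ℂ) (hτ : IsSiegel τ) (w : Fin 2 → ℂ) :
    th 13 w τ ^ 2 = -Yc τ ![1, 0] w * Yc τ ![0, 0] 0 - Yc τ ![1, 1] w * Yc τ ![0, 1] 0 + Yc τ ![0, 0] w * Yc τ ![1, 0] 0 + Yc τ ![0, 1] w * Yc τ ![1, 1] 0 := by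
  have h := theta_sq τ hτ ![1, 0] ![1, 0] w
  rw [sum4] at h
  have hth : th 13 w τ = thetaFn (fun j => (((![1, 0] : Fin 2 → Fin 2) j : ℕ) : ℝ) / 2)
      (fun j => (((![1, 0] : Fin 2 → Fin 2) j : ℕ) : ℝ) / 2) w τ := by
    unfold th
    rw [show thetaChars 13 = ((1, 0), (1, 0)) from rfl]
    congr 1 <;> funext j <;> fin_cases j <;> norm_num
  rw [hth, h]
  norm_num [Matrix.vec2_add, Fin.sum_univ_two,
    show (0 + 0 : Fin 2) = 0 from rfl, show (0 + 1 : Fin 2) = 1 from rfl,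
    show (1 + 0 : Fin 2) = 1 from rfl, show (1 + 1 : Fin 2) = 0 from rfl]
  try ring

lemma th15_sq (τ : Matrix (Fin 2) (Fin 2) ℂ) (hτ : IsSiegel τ) (w : Fin 2 → ℂ) :
    th 15 w τ ^ 2 = -Yc τ ![1, 1] w * Yc τ ![0, 0] 0 - Yc τ ![1, 0] w * Yc τ ![0, 1] 0 + Yc τ ![0, 1] w * Yc τ ![1, 0] 0 + Yc τ ![0, 0] w * Yc τ ![1, 1] 0 := by
  have h := theta_sq τ hτ ![1, 1] ![1, 0] w
  rw [sum4] at h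
  have hth : th 15 w τ = thetaFn (fun j => (((![1, 1] : Fin 2 → Fin 2) j : ℕ) : ℝ) / 2)
      (fun j => (((![1, 0] : Fin 2 → Fin 2) j : ℕ) : ℝ) / 2) w τ := by
    unfold th
    rw [show thetaChars 15 = ((1, 1), (1, 0)) from rfl]
    congr 1 <;> funext j <;> fin_cases j <;> norm_num
  rw [hth, h]
  norm_num [Matrix.vec2_add, Fin.sum_univ_two,
    show (0 + 0 : Fin 2) = 0 from rfl, show (0 + 1 : Fin 2) = 1 from rfl,
    show (1 + 0 : Fin 2) = 1 from rfl, show (1 + 1 : Fin 2) = 0 from rfl]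
  try ring


/-- The nine Mumford relations among squares of theta functions relating even and odd
theta functions (with θ-constant coefficients). -/
theorem mumford_relations_even_odd (τ : Matrix (Fin 2) (Fin 2) ℂ) (hτ : IsSiegel τ)
    (z : Fin 2 → ℂ) :
    th 5 0 τ ^ 2 * th 0 z τ ^ 2 - th 0 0 τ ^ 2 * th 5 z τ ^ 2
      + th 6 0 τ ^ 2 * th 12 z τ ^ 2 - th 1 0 τ ^ 2 * th 13 z τ ^ 2 = 0 ∧
    th 5 0 τ ^ 2 * th 1 z τ ^ 2 - th 1 0 τ ^ 2 * th 5 z τ ^ 2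
      - th 0 0 τ ^ 2 * th 13 z τ ^ 2 + th 6 0 τ ^ 2 * th 15 z τ ^ 2 = 0 ∧
    th 5 0 τ ^ 2 * th 2 z τ ^ 2 - th 2 0 τ ^ 2 * th 5 z τ ^ 2
      + th 8 0 τ ^ 2 * th 12 z τ ^ 2 - th 3 0 τ ^ 2 * th 13 z τ ^ 2 = 0 ∧
    th 5 0 τ ^ 2 * th 3 z τ ^ 2 - th 3 0 τ ^ 2 * th 5 z τ ^ 2
      - th 2 0 τ ^ 2 * th 13 z τ ^ 2 + th 8 0 τ ^ 2 * th 15 z τ ^ 2 = 0 ∧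
    th 5 0 τ ^ 2 * th 4 z τ ^ 2 - th 4 0 τ ^ 2 * th 5 z τ ^ 2
      + th 7 0 τ ^ 2 * th 12 z τ ^ 2 - th 9 0 τ ^ 2 * th 15 z τ ^ 2 = 0 ∧
    th 6 0 τ ^ 2 * th 5 z τ ^ 2 - th 5 0 τ ^ 2 * th 6 z τ ^ 2
      - th 0 0 τ ^ 2 * th 12 z τ ^ 2 + th 1 0 τ ^ 2 * th 15 z τ ^ 2 = 0 ∧
    th 7 0 τ ^ 2 * th 5 z τ ^ 2 - th 5 0 τ ^ 2 * th 7 z τ ^ 2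
      - th 4 0 τ ^ 2 * th 12 z τ ^ 2 + th 9 0 τ ^ 2 * th 13 z τ ^ 2 = 0 ∧
    th 8 0 τ ^ 2 * th 5 z τ ^ 2 - th 5 0 τ ^ 2 * th 8 z τ ^ 2
      - th 2 0 τ ^ 2 * th 12 z τ ^ 2 + th 3 0 τ ^ 2 * th 15 z τ ^ 2 = 0 ∧
    th 9 0 τ ^ 2 * th 5 z τ ^ 2 - th 5 0 τ ^ 2 * th 9 z τ ^ 2
      + th 7 0 τ ^ 2 * th 13 z τ ^ 2 - th 4 0 τ ^ 2 * th 15 z τ ^ 2 = 0 := by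
  refine ⟨?_, ?_, ?_, ?_, ?_, ?_, ?_, ?_, ?_⟩ <;>
    simp only [th0_sq τ hτ, th1_sq τ hτ, th2_sq τ hτ, th3_sq τ hτ, th4_sq τ hτ, th5_sq τ hτ,
      th6_sq τ hτ, th7_sq τ hτ, th8_sq τ hτ, th9_sq τ hτ, th12_sq τ hτ, th13_sq τ hτ,
      th15_sq τ hτ] <;> ring
end

section
/- Let λ'₁, λ'₂, λ'₃ be pairwise distinct complex numbers with λ'₁ ≠ 2 and λ'₁ ≠ −2. Define Λ'₁ = 2(2λ'₁ − λ'₂ − λ'₃)/(λ'₂ − λ'₃), Λ'₂ = Λ'₁ − 4(λ'₁ − λ'₂)(λ'₁ − λ'₃)/((λ'₁ + 2)(λ'₂ − λ'₃)), and Λ'₃ = Λ'₁ − 4(λ'₁ − λ'₂)(λ'₁ − λ'₃)/((λ'₁ − 2)(λ'₂ − λ'₃)). Then Λ'₁, Λ'₂, Λ'₃ are pairwise distinct, Λ'₁ ≠ 2, Λ'₁ ≠ −2, and the inverse relations hold: λ'₁ = 2(2Λ'₁ − Λ'₂ − Λ'₃)/(Λ'₂ − Λ'₃), λ'₂ − λ'₁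 = −4(Λ'₁ − Λ'₂)(Λ'₁ − Λ'₃)/((Λ'₁ + 2)(Λ'₂ − Λ'₃)), and λ'₃ − λ'₁ = −4(Λ'₁ − Λ'₂)(Λ'₁ − Λ'₃)/((Λ'₁ − 2)(Λ'₂ − Λ'₃)). -/
/-- The symmetric relations between the symmetrized moduli λ'ᵢ of a genus-two curve and
the symmetrized moduli Λ'ᵢ of its (2,2)-isogenous curve are involutive. -/
theorem isogenous_moduli_symmetric (l1 l2 l3 L1 L2 L3 : ℂ)
    (h12 : l1 ≠ l2) (h13 : l1 ≠ l3) (h23 : l2 ≠ l3)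
    (hp2 : l1 ≠ 2) (hm2 : l1 ≠ -2)
    (hL1 : L1 = 2 * (2 * l1 - l2 - l3) / (l2 - l3))
    (hL2 : L2 = L1 - 4 * (l1 - l2) * (l1 - l3) / ((l1 + 2) * (l2 - l3)))
    (hL3 : L3 = L1 - 4 * (l1 - l2) * (l1 - l3) / ((l1 - 2) * (l2 - l3))) :
    (L1 ≠ L2 ∧ L1 ≠ L3 ∧ L2 ≠ L3) ∧ L1 ≠ 2 ∧ L1 ≠ -2 ∧
    l1 = 2 * (2 * L1 - L2 - L3) / (L2 - L3) ∧
    l2 - l1 = -(4 * (L1 - L2) * (L1 - L3)) / ((L1 + 2) * (L2 - L3)) ∧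
    l3 - l1 = -(4 * (L1 - L2) * (L1 - L3)) / ((L1 - 2) * (L2 - L3)) := by
  have d23 : l2 - l3 ≠ 0 := sub_ne_zero.mpr h23
  have d12 : l1 - l2 ≠ 0 := sub_ne_zero.mpr h12
  have d13 : l1 - l3 ≠ 0 := sub_ne_zero.mpr h13
  have dp : l1 + 2 ≠ 0 := by
    intro h; exact hm2 (by linear_combination h)
  have dm : l1 - 2 ≠ 0 := sub_ne_zero.mpr hp2
  have e1 : L1 - L2 = 4 * (l1 - l2) * (l1 - l3) / ((l1 + 2) * (l2 - l3)) := by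
    rw [hL2]; ring
  have e2 : L1 - L3 = 4 * (l1 - l2) * (l1 - l3) / ((l1 - 2) * (l2 - l3)) := by
    rw [hL3]; ring
  have e3 : L2 - L3 = 16 * (l1 - l2) * (l1 - l3) / ((l1 + 2) * (l1 - 2) * (l2 - l3)) := by
    rw [hL2, hL3]; field_simp; ring
  have e4 : L1 - 2 = 4 * (l1 - l2) / (l2 - l3) := by
    rw [hL1]; field_simp; ring
  have e5 : L1 + 2 = 4 * (l1 - l3) / (l2 - l3) := by
    rw [hL1]; field_simp; ring
  have n1 : L1 - L2 ≠ 0 := by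
    rw [e1]; exact div_ne_zero (by exact mul_ne_zero (mul_ne_zero (by norm_num) d12) d13)
      (mul_ne_zero dp d23)
  have n2 : L1 - L3 ≠ 0 := by
    rw [e2]; exact div_ne_zero (mul_ne_zero (mul_ne_zero (by norm_num) d12) d13)
      (mul_ne_zero dm d23)
  have n3 : L2 - L3 ≠ 0 := by
    rw [e3]; exact div_ne_zero (mul_ne_zero (mul_ne_zero (by norm_num) d12) d13)
      (mul_ne_zero (mul_ne_zero dp dm) d23)
  have n4 : L1 - 2 ≠ 0 := by
    rw [e4]; exact div_ne_zero (mul_ne_zero (by norm_num) d12) d23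
  have n5 : L1 + 2 ≠ 0 := by
    rw [e5]; exact div_ne_zero (mul_ne_zero (by norm_num) d13) d23
  refine ⟨⟨sub_ne_zero.mp n1, sub_ne_zero.mp n2, sub_ne_zero.mp n3⟩,
    sub_ne_zero.mp n4, fun h => n5 (by rw [h]; ring), ?_, ?_, ?_⟩
  · rw [eq_div_iff n3, e3]
    have h21 : 2 * L1 - L2 - L3 = (L1 - L2) + (L1 - L3) := by ring
    rw [h21, e1, e2]
    field_simp
    ring
  · rw [eq_div_iff (mul_ne_zero n5 n3), e1, e2, e3, e5]
    field_simp
    ring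
  · rw [eq_div_iff (mul_ne_zero n4 n3), e1, e2, e3, e4]
    field_simp
    ring
end

section
/- Let w₀, x₀, y₀, z₀ be complex numbers with w₀²z₀² − x₀²y₀² ≠ 0, w₀²x₀² − y₀²z₀² ≠ 0, and w₀²y₀² − x₀²z₀² ≠ 0. Define A = (w₀⁴ − x₀⁴ − y₀⁴ + z₀⁴)/(w₀²z₀² − x₀²y₀²), B = (w₀⁴ + x₀⁴ − y₀⁴ − z₀⁴)/(w₀²x₀² − y₀²z₀²), C = (w₀⁴ − x₀⁴ + y₀⁴ − z₀⁴)/(w₀²y₀² − x₀²z₀²), and D = w₀x₀y₀z₀·∏_{ε,ε'∈{±1}}(w₀² + εx₀² + ε'y₀² + εε'z₀²) / ((w₀²z₀² − x₀²y₀²)(w₀²x₀² − y₀²z₀²)(w₀²y₀² − x₀²z₀²)). Then D² = A² + B² + C² + ABC − 4. -/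
lemma goepel_key (a b c d : ℂ) :
    a * b * c * d *
      ((a + b + c + d) * (a + b - c - d) * (a - b + c - d) * (a - b - c + d)) ^ 2 =
    (a ^ 2 - b ^ 2 - c ^ 2 + d ^ 2) ^ 2 * ((a * b - c * d) * (a * c - b * d)) ^ 2 +
    (a ^ 2 + b ^ 2 - c ^ 2 - d ^ 2) ^ 2 * ((a * d - b * c) * (a * c - b * d)) ^ 2 +
    (a ^ 2 - b ^ 2 + c ^ 2 - d ^ 2) ^ 2 * ((a * d - b * c) * (a * b - c * d)) ^ 2 +
    (a ^ 2 - b ^ 2 - c ^ 2 + d ^ 2) * (a ^ 2 + b ^ 2 - c ^ 2 - d ^ 2) *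
      (a ^ 2 - b ^ 2 + c ^ 2 - d ^ 2) *
      ((a * d - b * c) * (a * b - c * d) * (a * c - b * d)) -
    4 * ((a * d - b * c) * (a * b - c * d) * (a * c - b * d)) ^ 2 := by
  ring

/-- The moduli parameters A, B, C, D of a Göpel–Hudson quartic with node
`[w₀ : x₀ : y₀ : z₀]` satisfy the defining constraint `D² = A² + B² + C² + ABC − 4`. -/
theorem goepel_hudson_constraint (w0 x0 y0 z0 A B C D : ℂ)
    (h1 : w0 ^ 2 * z0 ^ 2 - x0 ^ 2 * y0 ^ 2 ≠ 0)
    (h2 : w0 ^ 2 * x0 ^ 2 - y0 ^ 2 * z0 ^ 2 ≠ 0)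
    (h3 : w0 ^ 2 * y0 ^ 2 - x0 ^ 2 * z0 ^ 2 ≠ 0)
    (hA : A = (w0 ^ 4 - x0 ^ 4 - y0 ^ 4 + z0 ^ 4) / (w0 ^ 2 * z0 ^ 2 - x0 ^ 2 * y0 ^ 2))
    (hB : B = (w0 ^ 4 + x0 ^ 4 - y0 ^ 4 - z0 ^ 4) / (w0 ^ 2 * x0 ^ 2 - y0 ^ 2 * z0 ^ 2))
    (hC : C = (w0 ^ 4 - x0 ^ 4 + y0 ^ 4 - z0 ^ 4) / (w0 ^ 2 * y0 ^ 2 - x0 ^ 2 * z0 ^ 2))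
    (hD : D = w0 * x0 * y0 * z0 *
        ((w0 ^ 2 + x0 ^ 2 + y0 ^ 2 + z0 ^ 2) * (w0 ^ 2 + x0 ^ 2 - y0 ^ 2 - z0 ^ 2) *
         (w0 ^ 2 - x0 ^ 2 + y0 ^ 2 - z0 ^ 2) * (w0 ^ 2 - x0 ^ 2 - y0 ^ 2 + z0 ^ 2)) /
      ((w0 ^ 2 * z0 ^ 2 - x0 ^ 2 * y0 ^ 2) * (w0 ^ 2 * x0 ^ 2 - y0 ^ 2 * z0 ^ 2) *
       (w0 ^ 2 * y0 ^ 2 - x0 ^ 2 * z0 ^ 2))) :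
    D ^ 2 = A ^ 2 + B ^ 2 + C ^ 2 + A * B * C - 4 := by
  set p := w0 ^ 2 * z0 ^ 2 - x0 ^ 2 * y0 ^ 2 with hp
  set q := w0 ^ 2 * x0 ^ 2 - y0 ^ 2 * z0 ^ 2 with hq
  set r := w0 ^ 2 * y0 ^ 2 - x0 ^ 2 * z0 ^ 2 with hr
  have hpqr : p * q * r ≠ 0 := mul_ne_zero (mul_ne_zero h1 h2) h3
  have hA2 : A * p = w0 ^ 4 - x0 ^ 4 - y0 ^ 4 + z0 ^ 4 := by
    rw [hA, div_mul_cancel₀ _ h1]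
  have hB2 : B * q = w0 ^ 4 + x0 ^ 4 - y0 ^ 4 - z0 ^ 4 := by
    rw [hB, div_mul_cancel₀ _ h2]
  have hC2 : C * r = w0 ^ 4 - x0 ^ 4 + y0 ^ 4 - z0 ^ 4 := by
    rw [hC, div_mul_cancel₀ _ h3]
  have hD2 : D * (p * q * r) = w0 * x0 * y0 * z0 *
      ((w0 ^ 2 + x0 ^ 2 + y0 ^ 2 + z0 ^ 2) * (w0 ^ 2 + x0 ^ 2 - y0 ^ 2 - z0 ^ 2) *
       (w0 ^ 2 - x0 ^ 2 + y0 ^ 2 - z0 ^ 2) * (w0 ^ 2 - x0 ^ 2 - y0 ^ 2 + z0 ^ 2)) := by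
    rw [hD, div_mul_cancel₀ _ hpqr]
  apply mul_right_cancel₀ (pow_ne_zero 2 hpqr)
  have key := goepel_key (w0 ^ 2) (x0 ^ 2) (y0 ^ 2) (z0 ^ 2)
  calc D ^ 2 * (p * q * r) ^ 2 = (D * (p * q * r)) ^ 2 := by ring
    _ = (A * p) ^ 2 * (q * r) ^ 2 + (B * q) ^ 2 * (p * r) ^ 2 + (C * r) ^ 2 * (p * q) ^ 2 +
        (A * p) * (B * q) * (C * r) * (p * q * r) - 4 * (p * q * r) ^ 2 := by
      rw [hD2, hA2, hB2, hC2, hp, hq, hr]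
      linear_combination key
    _ = (A ^ 2 + B ^ 2 + C ^ 2 + A * B * C - 4) * (p * q * r) ^ 2 := by ring
end

section
/- Let τ be in the Siegel upper half-space ℍ₂ and suppose the theta constants Θᵢ = Θᵢ(0) at the doubled period matrix satisfy Θ₁²Θ₂² − Θ₃²Θ₄² ≠ 0, Θ₁²Θ₃² − Θ₂²Θ₄² ≠ 0, and Θ₁²Θ₄² − Θ₂²Θ₃² ≠ 0. Define A = (Θ₁⁴ − Θ₂⁴ − Θ₃⁴ + Θ₄⁴)/(Θ₁²Θ₄² − Θ₂²Θ₃²), B = (Θ₁⁴ + Θ₂⁴ − Θ₃⁴ − Θ₄⁴)/(Θ₁²Θ₂² − Θ₃²Θ₄²), C = (Θ₁⁴ − Θ₂⁴ + Θ₃⁴ − Θ₄⁴)/(Θ₁²Θ₃² − Θ₂²Θ₄²), and D = Θ₁Θ₂Θ₃Θ₄·∏_{ε,ε'∈{±1}}(Θ₁² + εΘ₂² + ε'Θ₃² + εε'Θ₄²)/((Θ₁²Θ₂² − Θ₃²Θ₄²)(Θ₁²Θ₃² − Θ₂²Θ₄²)(Θ₁²Θ₄² − Θ₂²Θ₃²)).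 Then for every z ∈ ℂ², setting w = Θ₁(2z), x = Θ₂(2z), y = Θ₃(2z), z' = Θ₄(2z), one has w⁴ + x⁴ + y⁴ + z'⁴ + 2Dwxyz' − A(w²z'² + x²y²) − B(w²x² + y²z'²) − C(w²y² + x²z'²) = 0. -/
open scoped BigOperators

/-- `Th i z τ` is the theta function Θ_{i+1}(z), with the characteristic of θ_{i+1}
swapped, evaluated at `(z, 2τ)`. -/
noncomputable def Th (i : Fin 16) (z : Fin 2 → ℂ) (τ : Matrix (Fin 2) (Fin 2) ℂ) : ℂ :=
  thetaFn ![(thetaChars i).2.1 / 2, (thetaChars i).2.2 / 2]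
          ![(thetaChars i).1.1 / 2, (thetaChars i).1.2 / 2] z (2 • τ)


namespace GH

open Complex Real

set_option maxHeartbeats 2000000

noncomputable def tt (a b : Fin 2 → ℝ) (z : Fin 2 → ℂ) (τ : Matrix (Fin 2) (Fin 2) ℂ)
    (u : Fin 2 → ℤ) : ℂ :=
  Complex.exp ((Real.pi : ℂ) * Complex.I *
      ((∑ i, ∑ j, ((u i : ℂ) + (a i : ℂ)) * τ i j * ((u j : ℂ) + (a j : ℂ))) +
        2 * ∑ i, ((u i : ℂ) + (a i : ℂ)) * (z i + (b i : ℂ))))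

lemma thetaFn_eq (a b : Fin 2 → ℝ) (z : Fin 2 → ℂ) (τ : Matrix (Fin 2) (Fin 2) ℂ) :
    thetaFn a b z τ = ∑' u, tt a b z τ u := rfl

lemma isSiegel_two_smul {τ : Matrix (Fin 2) (Fin 2) ℂ} (hτ : IsSiegel τ) :
    IsSiegel (2 • τ) := by
  obtain ⟨h1, h2, h3⟩ := hτ
  have e : ∀ i j, ((2 • τ) i j).im = 2 * (τ i j).im := by
    intro i j; simp [Matrix.smul_apply]
  refine ⟨by simp [Matrix.smul_apply, h1], ?_, ?_⟩ <;> simp only [e]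
  · linarith
  · nlinarith

lemma core_ineq (α β γ m S Cst a0 a1 w0 w1 : ℝ) (n0 n1 : ℤ)
    (hγ : 0 < γ) (hα : 0 < α) (hd : 0 < α*γ - β^2)
    (hm : m = (α*γ - β^2)/(α+γ))
    (hS : S = |w0| + |w1|)
    (hC : Cst = m*(a0^2 + a1^2) + 2 * (|w0|) * (|a0|) + 2 * (|w1|) * (|a1|)) :
    -Real.pi * ((((n0 : ℝ) + a0)^2 * α + 2 * ((n0 : ℝ) + a0) * ((n1 : ℝ) + a1) * β
        + ((n1 : ℝ) + a1)^2 * γ) + 2 * (((n0 : ℝ) + a0) * w0 + ((n1 : ℝ) + a1) * w1))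
      ≤ Real.pi * Cst + (-Real.pi * (m/2 * (n0:ℝ)^2 - 2*S*|(n0:ℝ)|)
        + -Real.pi * (m/2 * (n1:ℝ)^2 - 2*S*|(n1:ℝ)|)) := by
  have hαγ : 0 < α + γ := by linarith
  have hmpos : 0 < m := by rw [hm]; positivity
  have hQ : m*(((n0 : ℝ) + a0)^2+((n1 : ℝ) + a1)^2) ≤ ((n0 : ℝ) + a0)^2*α
      + 2*((n0 : ℝ) + a0)*((n1 : ℝ) + a1)*β + ((n1 : ℝ) + a1)^2*γ := by
    rw [hm, div_mul_eq_mul_div, div_le_iff₀ hαγ]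
    nlinarith [sq_nonneg (α*((n0 : ℝ) + a0)+β*((n1 : ℝ) + a1)),
      sq_nonneg (β*((n0 : ℝ) + a0)+γ*((n1 : ℝ) + a1))]
  have habs0 : |(n0 : ℝ) + a0| ≤ |(n0:ℝ)| + |a0| := abs_add_le _ _
  have habs1 : |(n1 : ℝ) + a1| ≤ |(n1:ℝ)| + |a1| := abs_add_le _ _
  have hl0 : -(2*((n0 : ℝ) + a0)*w0) ≤ 2*((|(n0:ℝ)|) + |a0|)*|w0| := by
    have h1 := neg_abs_le (((n0 : ℝ) + a0)*w0)
    have h2 : |((n0 : ℝ) + a0)*w0| ≤ ((|(n0:ℝ)|) + |a0|) * |w0| := by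
      rw [abs_mul]; exact mul_le_mul_of_nonneg_right habs0 (abs_nonneg w0)
    nlinarith [h1, h2]
  have hl1 : -(2*((n1 : ℝ) + a1)*w1) ≤ 2*((|(n1:ℝ)|) + |a1|)*|w1| := by
    have h1 := neg_abs_le (((n1 : ℝ) + a1)*w1)
    have h2 : |((n1 : ℝ) + a1)*w1| ≤ ((|(n1:ℝ)|) + |a1|) * |w1| := by
      rw [abs_mul]; exact mul_le_mul_of_nonneg_right habs1 (abs_nonneg w1)
    nlinarith [h1, h2]
  have hs0 : (n0:ℝ)^2/2 - a0^2 ≤ ((n0 : ℝ) + a0)^2 := by nlinarith [sq_nonneg ((n0:ℝ) + 2*a0)]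
  have hs1 : (n1:ℝ)^2/2 - a1^2 ≤ ((n1 : ℝ) + a1)^2 := by nlinarith [sq_nonneg ((n1:ℝ) + 2*a1)]
  have hsq0 : m*((n0:ℝ)^2/2 - a0^2) ≤ m*((n0 : ℝ) + a0)^2 :=
    mul_le_mul_of_nonneg_left hs0 hmpos.le
  have hsq1 : m*((n1:ℝ)^2/2 - a1^2) ≤ m*((n1 : ℝ) + a1)^2 :=
    mul_le_mul_of_nonneg_left hs1 hmpos.le
  have hn0 : (0:ℝ) ≤ |(n0:ℝ)| := abs_nonneg _
  have hn1 : (0:ℝ) ≤ |(n1:ℝ)| := abs_nonneg _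
  have hw0S : |w0| ≤ S := by rw [hS]; linarith [abs_nonneg w1]
  have hw1S : |w1| ≤ S := by rw [hS]; linarith [abs_nonneg w0]
  have hu0 : (|(n0:ℝ)|) * |w0| ≤ (|(n0:ℝ)|) * S := mul_le_mul_of_nonneg_left hw0S hn0
  have hu1 : (|(n1:ℝ)|) * |w1| ≤ (|(n1:ℝ)|) * S := mul_le_mul_of_nonneg_left hw1S hn1
  have hmain : (m/2 * (n0:ℝ)^2 - 2*S*|(n0:ℝ)|) + (m/2 * (n1:ℝ)^2 - 2*S*|(n1:ℝ)|)
      ≤ Cst + ((((n0 : ℝ) + a0)^2 * α + 2 * ((n0 : ℝ) + a0) * ((n1 : ℝ) + a1) * β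
        + ((n1 : ℝ) + a1)^2 * γ) + 2 * (((n0 : ℝ) + a0) * w0 + ((n1 : ℝ) + a1) * w1)) := by
    rw [hC]
    linarith [hQ, hl0, hl1, hsq0, hsq1, hu0, hu1]
  have h2 : 0 ≤ Real.pi * ((Cst + ((((n0 : ℝ) + a0)^2 * α
      + 2 * ((n0 : ℝ) + a0) * ((n1 : ℝ) + a1) * β
      + ((n1 : ℝ) + a1)^2 * γ) + 2 * (((n0 : ℝ) + a0) * w0 + ((n1 : ℝ) + a1) * w1)))
      - ((m/2 * (n0:ℝ)^2 - 2*S*|(n0:ℝ)|) + (m/2 * (n1:ℝ)^2 - 2*S*|(n1:ℝ)|))) :=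
    mul_nonneg Real.pi_pos.le (by linarith [hmain])
  nlinarith [h2]

lemma norm_tt (a b : Fin 2 → ℝ) (z : Fin 2 → ℂ) (τ : Matrix (Fin 2) (Fin 2) ℂ)
    (hsym : τ 0 1 = τ 1 0) (u : Fin 2 → ℤ) :
    ‖tt a b z τ u‖ =
    Real.exp (-Real.pi * ((((u 0 : ℝ) + a 0)^2 * (τ 0 0).im
      + 2 * ((u 0 : ℝ) + a 0) * ((u 1 : ℝ) + a 1) * (τ 0 1).im
      + ((u 1 : ℝ) + a 1)^2 * (τ 1 1).im)
      + 2 * (((u 0 : ℝ) + a 0) * (z 0).im + ((u 1 : ℝ) + a 1) * (z 1).im))) := by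
  rw [tt, Complex.norm_exp]
  have hre : ∀ w : ℂ, ((Real.pi:ℂ) * Complex.I * w).re = -Real.pi * w.im := by
    intro w; simp [Complex.mul_re, Complex.mul_im]
  rw [hre]
  have him : ((∑ i, ∑ j, ((u i : ℂ) + (a i : ℂ)) * τ i j * ((u j : ℂ) + (a j : ℂ))) +
        2 * ∑ i, ((u i : ℂ) + (a i : ℂ)) * (z i + (b i : ℂ))).im =
      ((((u 0 : ℝ) + a 0)^2 * (τ 0 0).im
      + 2 * ((u 0 : ℝ) + a 0) * ((u 1 : ℝ) + a 1) * (τ 0 1).im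
      + ((u 1 : ℝ) + a 1)^2 * (τ 1 1).im)
      + 2 * (((u 0 : ℝ) + a 0) * (z 0).im + ((u 1 : ℝ) + a 1) * (z 1).im)) := by
    have e0 : ((u 0 : ℂ) + (a 0 : ℂ)) = (((u 0 : ℝ) + a 0 : ℝ) : ℂ) := by push_cast; ring
    have e1 : ((u 1 : ℂ) + (a 1 : ℂ)) = (((u 1 : ℝ) + a 1 : ℝ) : ℂ) := by push_cast; ring
    simp only [Fin.sum_univ_two, e0, e1, ← hsym]
    simp only [Complex.add_im, Complex.mul_im, Complex.mul_re, Complex.ofReal_re,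
      Complex.ofReal_im, Complex.add_re, Complex.re_ofNat, Complex.im_ofNat]
    ring
  rw [him]

lemma summable_norm_tt (a b : Fin 2 → ℝ) (z : Fin 2 → ℂ) {τ : Matrix (Fin 2) (Fin 2) ℂ}
    (hτ : IsSiegel τ) :
    Summable (fun u : Fin 2 → ℤ => ‖tt a b z τ u‖) := by
  obtain ⟨hsym, hγ, hdet⟩ := hτ
  have hα : 0 < (τ 0 0).im := by nlinarith [sq_nonneg ((τ 0 1).im)]
  have hd : 0 < (τ 0 0).im * (τ 1 1).im - ((τ 0 1).im)^2 := by nlinarith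
  set m : ℝ := ((τ 0 0).im * (τ 1 1).im - ((τ 0 1).im)^2)/((τ 0 0).im + (τ 1 1).im) with hm
  have hmpos : 0 < m := by rw [hm]; positivity
  set S : ℝ := |(z 0).im| + |(z 1).im| with hS
  set Cst : ℝ := m*((a 0)^2 + (a 1)^2) + 2 * (|(z 0).im|) * (|a 0|)
      + 2 * (|(z 1).im|) * (|a 1|) with hC
  have hT : 0 < m/2 := by linarith
  have hbs : Summable (fun n : ℤ => Real.exp (-Real.pi * ((m/2) * (n:ℝ)^2 - 2*S*|(n:ℝ)|))) := by
    have := summable_pow_mul_jacobiTheta₂_term_bound S hT 0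
    refine this.congr fun n => ?_
    push_cast
    ring_nf
  have h2d : Summable (fun P : ℤ × ℤ =>
      Real.exp (-Real.pi * ((m/2) * (P.1:ℝ)^2 - 2*S*|(P.1:ℝ)|)) *
      Real.exp (-Real.pi * ((m/2) * (P.2:ℝ)^2 - 2*S*|(P.2:ℝ)|))) :=
    hbs.mul_of_nonneg hbs (fun _ => (Real.exp_pos _).le) (fun _ => (Real.exp_pos _).le)
  have h2d' : Summable (fun u : Fin 2 → ℤ =>
      Real.exp (-Real.pi * ((m/2) * (u 0:ℝ)^2 - 2*S*|(u 0:ℝ)|)) *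
      Real.exp (-Real.pi * ((m/2) * (u 1:ℝ)^2 - 2*S*|(u 1:ℝ)|))) :=
    (Equiv.summable_iff (finTwoArrowEquiv ℤ)).mpr h2d
  refine Summable.of_nonneg_of_le (fun _ => norm_nonneg _) (fun u => ?_)
    (h2d'.mul_left (Real.exp (Real.pi * Cst)))
  rw [norm_tt a b z τ hsym u, ← Real.exp_add, ← Real.exp_add]
  apply Real.exp_le_exp.mpr
  exact core_ineq _ _ _ m S Cst (a 0) (a 1) ((z 0).im) ((z 1).im) (u 0) (u 1)
    hγ hα hd hm hS hC

def cb (b : Bool) : ℤ := if b then 1 else 0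
@[simp] lemma cb_true : cb true = 1 := rfl
@[simp] lemma cb_false : cb false = 0 := rfl

def reEquiv : ((Bool × Bool) × ((Fin 2 → ℤ) × (Fin 2 → ℤ))) ≃ ((Fin 2 → ℤ) × (Fin 2 → ℤ)) where
  toFun p := (![p.2.1 0 + p.2.2 0 + cb p.1.1, p.2.1 1 + p.2.2 1 + cb p.1.2],
              ![p.2.1 0 - p.2.2 0, p.2.1 1 - p.2.2 1])
  invFun q := ((decide ((q.1 0 - q.2 0) % 2 = 1), decide ((q.1 1 - q.2 1) % 2 = 1)),
               (![q.2 0 + (q.1 0 - q.2 0)/2, q.2 1 + (q.1 1 - q.2 1)/2],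
                ![(q.1 0 - q.2 0)/2, (q.1 1 - q.2 1)/2]))
  left_inv := by
    rintro ⟨⟨b0, b1⟩, u, v⟩
    simp only [Matrix.cons_val_zero, Matrix.cons_val_one, Matrix.head_cons, Prod.mk.injEq]
    refine ⟨⟨?_, ?_⟩, ?_, ?_⟩
    · cases b0 <;> simp <;> grind
    · cases b1 <;> simp <;> grind
    · funext i
      fin_cases i <;> simp <;> cases b0 <;> cases b1 <;> simp <;> omega
    · funext i
      fin_cases i <;> simp <;> cases b0 <;> cases b1 <;> simp <;> omega
  right_inv := by
    rintro ⟨m, n⟩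
    simp only [Matrix.cons_val_zero, Matrix.cons_val_one, Matrix.head_cons, Prod.mk.injEq]
    constructor
    · funext i
      fin_cases i <;> simp [cb] <;> split_ifs <;> omega
    · funext i
      fin_cases i <;> simp <;> omega

lemma reEquiv_apply (p : (Bool × Bool) × ((Fin 2 → ℤ) × (Fin 2 → ℤ))) :
    reEquiv p = (![p.2.1 0 + p.2.2 0 + cb p.1.1, p.2.1 1 + p.2.2 1 + cb p.1.2],
              ![p.2.1 0 - p.2.2 0, p.2.1 1 - p.2.2 1]) := rfl

noncomputable def Fθ (τ : Matrix (Fin 2) (Fin 2) ℂ) (a₀ a₁ b₀ b₁ : ℤ) (z : Fin 2 → ℂ) : ℂ :=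
  thetaFn ![(a₀:ℝ)/2,(a₁:ℝ)/2] ![(b₀:ℝ)/2,(b₁:ℝ)/2] z τ

noncomputable def Gθ (τ : Matrix (Fin 2) (Fin 2) ℂ) (c₀ c₁ : ℤ) (w : Fin 2 → ℂ) : ℂ :=
  thetaFn ![(c₀:ℝ)/2,(c₁:ℝ)/2] ![(0:ℝ),0] w (2 • τ)

noncomputable def sg (k : ℤ) : ℂ := (-1)^k

lemma sg_eq (k : ℤ) : sg k = Complex.exp ((k:ℂ) * (Real.pi:ℂ) * Complex.I) := by
  rw [sg, mul_assoc, Complex.exp_int_mul, Complex.exp_pi_mul_I]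

lemma innerP {τ : Matrix (Fin 2) (Fin 2) ℂ} (hτ : IsSiegel τ) (a₀ a₁ b₀ b₁ e₀ e₁ : ℤ)
    (x y : Fin 2 → ℂ) :
    ∑' uv : (Fin 2 → ℤ) × (Fin 2 → ℤ),
      tt ![(a₀:ℝ)/2,(a₁:ℝ)/2] ![(b₀:ℝ)/2,(b₁:ℝ)/2] x τ
          ![uv.1 0 + uv.2 0 + e₀, uv.1 1 + uv.2 1 + e₁] *
      tt ![(a₀:ℝ)/2,(a₁:ℝ)/2] ![(b₀:ℝ)/2,(b₁:ℝ)/2] y τ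
          ![uv.1 0 - uv.2 0, uv.1 1 - uv.2 1]
    = sg ((a₀+e₀)*b₀ + (a₁+e₁)*b₁) * Gθ τ (a₀+e₀) (a₁+e₁) (x+y) * Gθ τ e₀ e₁ (x-y) := by
  have h2τ := isSiegel_two_smul hτ
  have h1n := summable_norm_tt ![((a₀+e₀:ℤ):ℝ)/2,((a₁+e₁:ℤ):ℝ)/2] ![(0:ℝ),0] (x+y) h2τ
  have h2n := summable_norm_tt ![((e₀:ℤ):ℝ)/2,((e₁:ℤ):ℝ)/2] ![(0:ℝ),0] (x-y) h2τ
  have hterm : ∀ uv : (Fin 2 → ℤ) × (Fin 2 → ℤ),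
      tt ![(a₀:ℝ)/2,(a₁:ℝ)/2] ![(b₀:ℝ)/2,(b₁:ℝ)/2] x τ
          ![uv.1 0 + uv.2 0 + e₀, uv.1 1 + uv.2 1 + e₁] *
      tt ![(a₀:ℝ)/2,(a₁:ℝ)/2] ![(b₀:ℝ)/2,(b₁:ℝ)/2] y τ
          ![uv.1 0 - uv.2 0, uv.1 1 - uv.2 1] =
      sg ((a₀+e₀)*b₀ + (a₁+e₁)*b₁) *
        (tt ![((a₀+e₀:ℤ):ℝ)/2,((a₁+e₁:ℤ):ℝ)/2] ![(0:ℝ),0] (x+y) (2 • τ) uv.1 *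
         tt ![((e₀:ℤ):ℝ)/2,((e₁:ℤ):ℝ)/2] ![(0:ℝ),0] (x-y) (2 • τ) uv.2) := by
    rintro ⟨u, v⟩
    rw [tt, tt, tt, tt, ← Complex.exp_add, sg_eq, ← Complex.exp_add, ← Complex.exp_add]
    rw [show ((Real.pi : ℂ) * Complex.I *
      ((∑ i, ∑ j, ((![u 0 + v 0 + e₀, u 1 + v 1 + e₁] i : ℂ) + ((![(a₀:ℝ)/2,(a₁:ℝ)/2]) i : ℂ)) * τ i j * ((![u 0 + v 0 + e₀, u 1 + v 1 + e₁] j : ℂ) + ((![(a₀:ℝ)/2,(a₁:ℝ)/2]) j : ℂ))) +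
        2 * ∑ i, ((![u 0 + v 0 + e₀, u 1 + v 1 + e₁] i : ℂ) + ((![(a₀:ℝ)/2,(a₁:ℝ)/2]) i : ℂ)) * (x i + ((![(b₀:ℝ)/2,(b₁:ℝ)/2]) i : ℂ)))) +
    ((Real.pi : ℂ) * Complex.I *
      ((∑ i, ∑ j, ((![u 0 - v 0, u 1 - v 1] i : ℂ) + ((![(a₀:ℝ)/2,(a₁:ℝ)/2]) i : ℂ)) * τ i j * ((![u 0 - v 0, u 1 - v 1] j : ℂ) + ((![(a₀:ℝ)/2,(a₁:ℝ)/2]) j : ℂ))) +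
        2 * ∑ i, ((![u 0 - v 0, u 1 - v 1] i : ℂ) + ((![(a₀:ℝ)/2,(a₁:ℝ)/2]) i : ℂ)) * (y i + ((![(b₀:ℝ)/2,(b₁:ℝ)/2]) i : ℂ)))) =
    ((((a₀+e₀)*b₀ + (a₁+e₁)*b₁ : ℤ) : ℂ) * (Real.pi : ℂ) * Complex.I
    + (Real.pi : ℂ) * Complex.I *
      ((∑ i, ∑ j, ((u i : ℂ) + ((![((a₀+e₀:ℤ):ℝ)/2,((a₁+e₁:ℤ):ℝ)/2]) i : ℂ)) * (2 • τ) i j * ((u j : ℂ) + ((![((a₀+e₀:ℤ):ℝ)/2,((a₁+e₁:ℤ):ℝ)/2]) j : ℂ))) +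
        2 * ∑ i, ((u i : ℂ) + ((![((a₀+e₀:ℤ):ℝ)/2,((a₁+e₁:ℤ):ℝ)/2]) i : ℂ)) * ((x + y) i + ((![(0:ℝ),0]) i : ℂ)))
    + (Real.pi : ℂ) * Complex.I *
      ((∑ i, ∑ j, ((v i : ℂ) + ((![((e₀:ℤ):ℝ)/2,((e₁:ℤ):ℝ)/2]) i : ℂ)) * (2 • τ) i j * ((v j : ℂ) + ((![((e₀:ℤ):ℝ)/2,((e₁:ℤ):ℝ)/2]) j : ℂ))) +
        2 * ∑ i, ((v i : ℂ) + ((![((e₀:ℤ):ℝ)/2,((e₁:ℤ):ℝ)/2]) i : ℂ)) * ((x - y) i + ((![(0:ℝ),0]) i : ℂ))))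
    + ((u 0 * b₀ + u 1 * b₁ : ℤ) : ℂ) * (2 * (Real.pi : ℂ) * Complex.I) from by
      simp only [Fin.sum_univ_two, Matrix.cons_val_zero, Matrix.cons_val_one, Matrix.head_cons,
        Matrix.smul_apply, nsmul_eq_mul, Pi.add_apply, Pi.sub_apply, Nat.cast_ofNat]
      push_cast
      ring]
    rw [Complex.exp_add, Complex.exp_int_mul_two_pi_mul_I, mul_one]
    dsimp only
    rw [add_assoc]
  rw [tsum_congr hterm, tsum_mul_left]
  rw [← tsum_mul_tsum_of_summable_norm h1n h2n]
  rw [Gθ, Gθ, thetaFn_eq, thetaFn_eq, mul_assoc]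

lemma masterP {τ : Matrix (Fin 2) (Fin 2) ℂ} (hτ : IsSiegel τ) (a₀ a₁ b₀ b₁ : ℤ)
    (x y : Fin 2 → ℂ) :
    Fθ τ a₀ a₁ b₀ b₁ x * Fθ τ a₀ a₁ b₀ b₁ y =
      sg (a₀*b₀ + a₁*b₁) * Gθ τ a₀ a₁ (x+y) * Gθ τ 0 0 (x-y)
    + sg ((a₀+1)*b₀ + (a₁+1)*b₁) * Gθ τ (a₀+1) (a₁+1) (x+y) * Gθ τ 1 1 (x-y)
    + sg ((a₀+1)*b₀ + a₁*b₁) * Gθ τ (a₀+1) a₁ (x+y) * Gθ τ 1 0 (x-y)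
    + sg (a₀*b₀ + (a₁+1)*b₁) * Gθ τ a₀ (a₁+1) (x+y) * Gθ τ 0 1 (x-y) := by
  have hfx := summable_norm_tt ![(a₀:ℝ)/2,(a₁:ℝ)/2] ![(b₀:ℝ)/2,(b₁:ℝ)/2] x hτ
  have hfy := summable_norm_tt ![(a₀:ℝ)/2,(a₁:ℝ)/2] ![(b₀:ℝ)/2,(b₁:ℝ)/2] y hτ
  rw [Fθ, Fθ, thetaFn_eq, thetaFn_eq, tsum_mul_tsum_of_summable_norm hfx hfy]
  rw [← Equiv.tsum_eq reEquiv (fun q : (Fin 2 → ℤ) × (Fin 2 → ℤ) =>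
    tt ![(a₀:ℝ)/2,(a₁:ℝ)/2] ![(b₀:ℝ)/2,(b₁:ℝ)/2] x τ q.1 *
    tt ![(a₀:ℝ)/2,(a₁:ℝ)/2] ![(b₀:ℝ)/2,(b₁:ℝ)/2] y τ q.2)]
  have hsum : Summable ((fun q : (Fin 2 → ℤ) × (Fin 2 → ℤ) =>
      tt ![(a₀:ℝ)/2,(a₁:ℝ)/2] ![(b₀:ℝ)/2,(b₁:ℝ)/2] x τ q.1 *
      tt ![(a₀:ℝ)/2,(a₁:ℝ)/2] ![(b₀:ℝ)/2,(b₁:ℝ)/2] y τ q.2) ∘ reEquiv) :=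
    (Equiv.summable_iff reEquiv).mpr (summable_mul_of_summable_norm hfx hfy)
  simp only [Function.comp_def, reEquiv_apply] at hsum
  simp only [reEquiv_apply]
  rw [Summable.tsum_prod hsum, tsum_fintype, Fintype.sum_prod_type, Fintype.sum_bool,
    Fintype.sum_bool, Fintype.sum_bool]
  simp only [cb_true, cb_false, add_zero]
  have I11 := innerP hτ a₀ a₁ b₀ b₁ 1 1 x y
  have I10 := innerP hτ a₀ a₁ b₀ b₁ 1 0 x y
  have I01 := innerP hτ a₀ a₁ b₀ b₁ 0 1 x y
  have I00 := innerP hτ a₀ a₁ b₀ b₁ 0 0 x y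
  simp only [add_zero] at I10 I01 I00
  rw [I11, I10, I01, I00]
  ring

lemma thetaFn_congr {a a' b b' : Fin 2 → ℝ} (z : Fin 2 → ℂ) (τ : Matrix (Fin 2) (Fin 2) ℂ)
    (ha : a = a') (hb : b = b') : thetaFn a b z τ = thetaFn a' b' z τ := by rw [ha, hb]

lemma Th_eq_G0 (z : Fin 2 → ℂ) (τ : Matrix (Fin 2) (Fin 2) ℂ) : Th 0 z τ = Gθ τ 0 0 z := by
  refine thetaFn_congr z _ ?_ ?_ <;> funext i <;> fin_cases i <;> simp [thetaChars]

lemma Th_eq_G1 (z : Fin 2 → ℂ) (τ : Matrix (Fin 2) (Fin 2) ℂ) : Th 1 z τ = Gθ τ 1 1 z := by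
  refine thetaFn_congr z _ ?_ ?_ <;> funext i <;> fin_cases i <;> simp [thetaChars]

lemma Th_eq_G2 (z : Fin 2 → ℂ) (τ : Matrix (Fin 2) (Fin 2) ℂ) : Th 2 z τ = Gθ τ 1 0 z := by
  refine thetaFn_congr z _ ?_ ?_ <;> funext i <;> fin_cases i <;> simp [thetaChars]

lemma Th_eq_G3 (z : Fin 2 → ℂ) (τ : Matrix (Fin 2) (Fin 2) ℂ) : Th 3 z τ = Gθ τ 0 1 z := by
  refine thetaFn_congr z _ ?_ ?_ <;> funext i <;> fin_cases i <;> simp [thetaChars]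

lemma Gθ_shift (τ : Matrix (Fin 2) (Fin 2) ℂ) (c₀ c₁ k₀ k₁ : ℤ) (w : Fin 2 → ℂ) :
    Gθ τ (c₀ + 2*k₀) (c₁ + 2*k₁) w = Gθ τ c₀ c₁ w := by
  rw [Gθ, Gθ, thetaFn, thetaFn]
  rw [← Equiv.tsum_eq (Equiv.addRight (![-k₀, -k₁] : Fin 2 → ℤ))]
  apply tsum_congr
  intro u
  congr 1
  have h0 : ((Equiv.addRight (![-k₀, -k₁] : Fin 2 → ℤ)) u) 0 = u 0 + -k₀ := rfl
  have h1 : ((Equiv.addRight (![-k₀, -k₁] : Fin 2 → ℤ)) u) 1 = u 1 + -k₁ := rfl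
  simp only [Fin.sum_univ_two, h0, h1, Matrix.cons_val_zero, Matrix.cons_val_one,
    Matrix.head_cons]
  push_cast
  ring

lemma keyW (p q r s A B C D : ℂ)
    (h1 : p^2*q^2 - r^2*s^2 ≠ 0) (h2 : p^2*r^2 - q^2*s^2 ≠ 0) (h3 : p^2*s^2 - q^2*r^2 ≠ 0)
    (hA : A = (p^4 - q^4 - r^4 + s^4)/(p^2*s^2 - q^2*r^2))
    (hB : B = (p^4 + q^4 - r^4 - s^4)/(p^2*q^2 - r^2*s^2))
    (hC : C = (p^4 - q^4 + r^4 - s^4)/(p^2*r^2 - q^2*s^2))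
    (hD : D = p*q*r*s*((p^2+q^2+r^2+s^2)*(p^2+q^2-r^2-s^2)*(p^2-q^2+r^2-s^2)*(p^2-q^2-r^2+s^2))
      /((p^2*q^2-r^2*s^2)*(p^2*r^2-q^2*s^2)*(p^2*s^2-q^2*r^2))) :
    2*p^3 = B*p*q^2 + C*p*r^2 + A*p*s^2 - D*q*r*s := by
  rw [hA, hB, hC, hD]; field_simp; ring

lemma keyX (p q r s A B C D : ℂ)
    (h1 : p^2*q^2 - r^2*s^2 ≠ 0) (h2 : p^2*r^2 - q^2*s^2 ≠ 0) (h3 : p^2*s^2 - q^2*r^2 ≠ 0)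
    (hA : A = (p^4 - q^4 - r^4 + s^4)/(p^2*s^2 - q^2*r^2))
    (hB : B = (p^4 + q^4 - r^4 - s^4)/(p^2*q^2 - r^2*s^2))
    (hC : C = (p^4 - q^4 + r^4 - s^4)/(p^2*r^2 - q^2*s^2))
    (hD : D = p*q*r*s*((p^2+q^2+r^2+s^2)*(p^2+q^2-r^2-s^2)*(p^2-q^2+r^2-s^2)*(p^2-q^2-r^2+s^2))
      /((p^2*q^2-r^2*s^2)*(p^2*r^2-q^2*s^2)*(p^2*s^2-q^2*r^2))) :
    2*q^3 = B*p^2*q + A*q*r^2 + C*q*s^2 - D*p*r*s := by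
  have h1a : q^2*p^2 - r^2*s^2 ≠ 0 := fun h => h1 (by linear_combination h)
  have h1b : p^2*q^2 - s^2*r^2 ≠ 0 := fun h => h1 (by linear_combination h)
  have h1c : q^2*p^2 - s^2*r^2 ≠ 0 := fun h => h1 (by linear_combination h)
  have h2a : r^2*p^2 - q^2*s^2 ≠ 0 := fun h => h2 (by linear_combination h)
  have h2b : p^2*r^2 - s^2*q^2 ≠ 0 := fun h => h2 (by linear_combination h)
  have h2c : r^2*p^2 - s^2*q^2 ≠ 0 := fun h => h2 (by linear_combination h)
  have h3a : s^2*p^2 - q^2*r^2 ≠ 0 := fun h => h3 (by linear_combination h)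
  have h3b : p^2*s^2 - r^2*q^2 ≠ 0 := fun h => h3 (by linear_combination h)
  have h3c : s^2*p^2 - r^2*q^2 ≠ 0 := fun h => h3 (by linear_combination h)
  rw [hA, hB, hC, hD]; field_simp; ring

lemma keyY (p q r s A B C D : ℂ)
    (h1 : p^2*q^2 - r^2*s^2 ≠ 0) (h2 : p^2*r^2 - q^2*s^2 ≠ 0) (h3 : p^2*s^2 - q^2*r^2 ≠ 0)
    (hA : A = (p^4 - q^4 - r^4 + s^4)/(p^2*s^2 - q^2*r^2))
    (hB : B = (p^4 + q^4 - r^4 - s^4)/(p^2*q^2 - r^2*s^2))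
    (hC : C = (p^4 - q^4 + r^4 - s^4)/(p^2*r^2 - q^2*s^2))
    (hD : D = p*q*r*s*((p^2+q^2+r^2+s^2)*(p^2+q^2-r^2-s^2)*(p^2-q^2+r^2-s^2)*(p^2-q^2-r^2+s^2))
      /((p^2*q^2-r^2*s^2)*(p^2*r^2-q^2*s^2)*(p^2*s^2-q^2*r^2))) :
    2*r^3 = C*p^2*r + A*q^2*r + B*r*s^2 - D*p*q*s := by
  have h1a : q^2*p^2 - r^2*s^2 ≠ 0 := fun h => h1 (by linear_combination h)
  have h1b : p^2*q^2 - s^2*r^2 ≠ 0 := fun h => h1 (by linear_combination h)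
  have h1c : q^2*p^2 - s^2*r^2 ≠ 0 := fun h => h1 (by linear_combination h)
  have h2a : r^2*p^2 - q^2*s^2 ≠ 0 := fun h => h2 (by linear_combination h)
  have h2b : p^2*r^2 - s^2*q^2 ≠ 0 := fun h => h2 (by linear_combination h)
  have h2c : r^2*p^2 - s^2*q^2 ≠ 0 := fun h => h2 (by linear_combination h)
  have h3a : s^2*p^2 - q^2*r^2 ≠ 0 := fun h => h3 (by linear_combination h)
  have h3b : p^2*s^2 - r^2*q^2 ≠ 0 := fun h => h3 (by linear_combination h)
  have h3c : s^2*p^2 - r^2*q^2 ≠ 0 := fun h => h3 (by linear_combination h)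
  rw [hA, hB, hC, hD]; field_simp; ring

lemma keyZ (p q r s A B C D : ℂ)
    (h1 : p^2*q^2 - r^2*s^2 ≠ 0) (h2 : p^2*r^2 - q^2*s^2 ≠ 0) (h3 : p^2*s^2 - q^2*r^2 ≠ 0)
    (hA : A = (p^4 - q^4 - r^4 + s^4)/(p^2*s^2 - q^2*r^2))
    (hB : B = (p^4 + q^4 - r^4 - s^4)/(p^2*q^2 - r^2*s^2))
    (hC : C = (p^4 - q^4 + r^4 - s^4)/(p^2*r^2 - q^2*s^2))
    (hD : D = p*q*r*s*((p^2+q^2+r^2+s^2)*(p^2+q^2-r^2-s^2)*(p^2-q^2+r^2-s^2)*(p^2-q^2-r^2+s^2))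
      /((p^2*q^2-r^2*s^2)*(p^2*r^2-q^2*s^2)*(p^2*s^2-q^2*r^2))) :
    2*s^3 = A*p^2*s + C*q^2*s + B*r^2*s - D*p*q*r := by
  have h1a : q^2*p^2 - r^2*s^2 ≠ 0 := fun h => h1 (by linear_combination h)
  have h1b : p^2*q^2 - s^2*r^2 ≠ 0 := fun h => h1 (by linear_combination h)
  have h1c : q^2*p^2 - s^2*r^2 ≠ 0 := fun h => h1 (by linear_combination h)
  have h2a : r^2*p^2 - q^2*s^2 ≠ 0 := fun h => h2 (by linear_combination h)
  have h2b : p^2*r^2 - s^2*q^2 ≠ 0 := fun h => h2 (by linear_combination h)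
  have h2c : r^2*p^2 - s^2*q^2 ≠ 0 := fun h => h2 (by linear_combination h)
  have h3a : s^2*p^2 - q^2*r^2 ≠ 0 := fun h => h3 (by linear_combination h)
  have h3b : p^2*s^2 - r^2*q^2 ≠ 0 := fun h => h3 (by linear_combination h)
  have h3c : s^2*p^2 - r^2*q^2 ≠ 0 := fun h => h3 (by linear_combination h)
  rw [hA, hB, hC, hD]; field_simp; ring

end GH

set_option maxHeartbeats 4000000 in
/-- For τ ∈ ℍ₂ with nondegenerate theta constants at the doubled period matrix, the point
`[Θ₁(2z) : Θ₂(2z) : Θ₃(2z) : Θ₄(2z)]` lies on the Göpel–Hudson quartic with moduli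
A, B, C, D given by the theta constants Θᵢ = Θᵢ(0). -/
theorem goepel_hudson_quartic_theta (τ : Matrix (Fin 2) (Fin 2) ℂ) (hτ : IsSiegel τ)
    (h1 : Th 0 0 τ ^ 2 * Th 1 0 τ ^ 2 - Th 2 0 τ ^ 2 * Th 3 0 τ ^ 2 ≠ 0)
    (h2 : Th 0 0 τ ^ 2 * Th 2 0 τ ^ 2 - Th 1 0 τ ^ 2 * Th 3 0 τ ^ 2 ≠ 0)
    (h3 : Th 0 0 τ ^ 2 * Th 3 0 τ ^ 2 - Th 1 0 τ ^ 2 * Th 2 0 τ ^ 2 ≠ 0)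
    (A B C D : ℂ)
    (hA : A = (Th 0 0 τ ^ 4 - Th 1 0 τ ^ 4 - Th 2 0 τ ^ 4 + Th 3 0 τ ^ 4) /
      (Th 0 0 τ ^ 2 * Th 3 0 τ ^ 2 - Th 1 0 τ ^ 2 * Th 2 0 τ ^ 2))
    (hB : B = (Th 0 0 τ ^ 4 + Th 1 0 τ ^ 4 - Th 2 0 τ ^ 4 - Th 3 0 τ ^ 4) /
      (Th 0 0 τ ^ 2 * Th 1 0 τ ^ 2 - Th 2 0 τ ^ 2 * Th 3 0 τ ^ 2))
    (hC : C = (Th 0 0 τ ^ 4 - Th 1 0 τ ^ 4 + Th 2 0 τ ^ 4 - Th 3 0 τ ^ 4) /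
      (Th 0 0 τ ^ 2 * Th 2 0 τ ^ 2 - Th 1 0 τ ^ 2 * Th 3 0 τ ^ 2))
    (hD : D = Th 0 0 τ * Th 1 0 τ * Th 2 0 τ * Th 3 0 τ *
      ((Th 0 0 τ ^ 2 + Th 1 0 τ ^ 2 + Th 2 0 τ ^ 2 + Th 3 0 τ ^ 2) *
       (Th 0 0 τ ^ 2 + Th 1 0 τ ^ 2 - Th 2 0 τ ^ 2 - Th 3 0 τ ^ 2) *
       (Th 0 0 τ ^ 2 - Th 1 0 τ ^ 2 + Th 2 0 τ ^ 2 - Th 3 0 τ ^ 2) *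
       (Th 0 0 τ ^ 2 - Th 1 0 τ ^ 2 - Th 2 0 τ ^ 2 + Th 3 0 τ ^ 2)) /
      ((Th 0 0 τ ^ 2 * Th 1 0 τ ^ 2 - Th 2 0 τ ^ 2 * Th 3 0 τ ^ 2) *
       (Th 0 0 τ ^ 2 * Th 2 0 τ ^ 2 - Th 1 0 τ ^ 2 * Th 3 0 τ ^ 2) *
       (Th 0 0 τ ^ 2 * Th 3 0 τ ^ 2 - Th 1 0 τ ^ 2 * Th 2 0 τ ^ 2))) :
    ∀ z : Fin 2 → ℂ,
      Th 0 ((2 : ℂ) • z) τ ^ 4 + Th 1 ((2 : ℂ) • z) τ ^ 4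
        + Th 2 ((2 : ℂ) • z) τ ^ 4 + Th 3 ((2 : ℂ) • z) τ ^ 4
        + 2 * D * Th 0 ((2 : ℂ) • z) τ * Th 1 ((2 : ℂ) • z) τ
            * Th 2 ((2 : ℂ) • z) τ * Th 3 ((2 : ℂ) • z) τ
        - A * (Th 0 ((2 : ℂ) • z) τ ^ 2 * Th 3 ((2 : ℂ) • z) τ ^ 2
            + Th 1 ((2 : ℂ) • z) τ ^ 2 * Th 2 ((2 : ℂ) • z) τ ^ 2)
        - B * (Th 0 ((2 : ℂ) • z) τ ^ 2 * Th 1 ((2 : ℂ) • z) τ ^ 2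
            + Th 2 ((2 : ℂ) • z) τ ^ 2 * Th 3 ((2 : ℂ) • z) τ ^ 2)
        - C * (Th 0 ((2 : ℂ) • z) τ ^ 2 * Th 2 ((2 : ℂ) • z) τ ^ 2
            + Th 1 ((2 : ℂ) • z) τ ^ 2 * Th 3 ((2 : ℂ) • z) τ ^ 2) = 0 := by
  intro z
  simp only [GH.Th_eq_G0, GH.Th_eq_G1, GH.Th_eq_G2, GH.Th_eq_G3] at h1 h2 h3 hA hB hC hD ⊢
  have hKW := GH.keyW _ _ _ _ A B C D h1 h2 h3 hA hB hC hD
  have hKX := GH.keyX _ _ _ _ A B C D h1 h2 h3 hA hB hC hD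
  have hKY := GH.keyY _ _ _ _ A B C D h1 h2 h3 hA hB hC hD
  have hKZ := GH.keyZ _ _ _ _ A B C D h1 h2 h3 hA hB hC hD
  have s22 : ∀ w, GH.Gθ τ 2 2 w = GH.Gθ τ 0 0 w := fun w => by
    have := GH.Gθ_shift τ 0 0 1 1 w; norm_num at this; exact this
  have s21 : ∀ w, GH.Gθ τ 2 1 w = GH.Gθ τ 0 1 w := fun w => by
    have := GH.Gθ_shift τ 0 1 1 0 w; norm_num at this; exact this
  have s12 : ∀ w, GH.Gθ τ 1 2 w = GH.Gθ τ 1 0 w := fun w => by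
    have := GH.Gθ_shift τ 1 0 0 1 w; norm_num at this; exact this
  have s20 : ∀ w, GH.Gθ τ 2 0 w = GH.Gθ τ 0 0 w := fun w => by
    have := GH.Gθ_shift τ 0 0 1 0 w; norm_num at this; exact this
  have s02 : ∀ w, GH.Gθ τ 0 2 w = GH.Gθ τ 0 0 w := fun w => by
    have := GH.Gθ_shift τ 0 0 0 1 w; norm_num at this; exact this
  have Pa1 := GH.masterP hτ 0 0 0 0 ((2:ℂ) • z) 0
  have Pb1 := GH.masterP hτ 0 0 0 0 ((2:ℂ) • z) ((2:ℂ) • z)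
  have Pc1 := GH.masterP hτ 0 0 0 0 (0 : Fin 2 → ℂ) 0
  simp only [add_zero, sub_zero, sub_self] at Pa1 Pb1 Pc1
  norm_num [GH.sg] at Pa1 Pb1 Pc1
  have h_1 : (GH.Fθ τ 0 0 0 0 ((2:ℂ) • z) * GH.Fθ τ 0 0 0 0 0)^2
      = (GH.Fθ τ 0 0 0 0 ((2:ℂ) • z) * GH.Fθ τ 0 0 0 0 ((2:ℂ) • z))
        * (GH.Fθ τ 0 0 0 0 0 * GH.Fθ τ 0 0 0 0 0) := by ring
  rw [Pa1, Pb1, Pc1] at h_1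
  clear Pa1 Pb1 Pc1
  have Pa2 := GH.masterP hτ 0 0 1 1 ((2:ℂ) • z) 0
  have Pb2 := GH.masterP hτ 0 0 1 1 ((2:ℂ) • z) ((2:ℂ) • z)
  have Pc2 := GH.masterP hτ 0 0 1 1 (0 : Fin 2 → ℂ) 0
  simp only [add_zero, sub_zero, sub_self] at Pa2 Pb2 Pc2
  norm_num [GH.sg] at Pa2 Pb2 Pc2
  have h_2 : (GH.Fθ τ 0 0 1 1 ((2:ℂ) • z) * GH.Fθ τ 0 0 1 1 0)^2
      = (GH.Fθ τ 0 0 1 1 ((2:ℂ) • z) * GH.Fθ τ 0 0 1 1 ((2:ℂ) • z))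
        * (GH.Fθ τ 0 0 1 1 0 * GH.Fθ τ 0 0 1 1 0) := by ring
  rw [Pa2, Pb2, Pc2] at h_2
  clear Pa2 Pb2 Pc2
  have Pa3 := GH.masterP hτ 0 0 1 0 ((2:ℂ) • z) 0
  have Pb3 := GH.masterP hτ 0 0 1 0 ((2:ℂ) • z) ((2:ℂ) • z)
  have Pc3 := GH.masterP hτ 0 0 1 0 (0 : Fin 2 → ℂ) 0
  simp only [add_zero, sub_zero, sub_self] at Pa3 Pb3 Pc3
  norm_num [GH.sg] at Pa3 Pb3 Pc3
  have h_3 : (GH.Fθ τ 0 0 1 0 ((2:ℂ) • z) * GH.Fθ τ 0 0 1 0 0)^2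
      = (GH.Fθ τ 0 0 1 0 ((2:ℂ) • z) * GH.Fθ τ 0 0 1 0 ((2:ℂ) • z))
        * (GH.Fθ τ 0 0 1 0 0 * GH.Fθ τ 0 0 1 0 0) := by ring
  rw [Pa3, Pb3, Pc3] at h_3
  clear Pa3 Pb3 Pc3
  have Pa4 := GH.masterP hτ 0 0 0 1 ((2:ℂ) • z) 0
  have Pb4 := GH.masterP hτ 0 0 0 1 ((2:ℂ) • z) ((2:ℂ) • z)
  have Pc4 := GH.masterP hτ 0 0 0 1 (0 : Fin 2 → ℂ) 0
  simp only [add_zero, sub_zero, sub_self] at Pa4 Pb4 Pc4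
  norm_num [GH.sg] at Pa4 Pb4 Pc4
  have h_4 : (GH.Fθ τ 0 0 0 1 ((2:ℂ) • z) * GH.Fθ τ 0 0 0 1 0)^2
      = (GH.Fθ τ 0 0 0 1 ((2:ℂ) • z) * GH.Fθ τ 0 0 0 1 ((2:ℂ) • z))
        * (GH.Fθ τ 0 0 0 1 0 * GH.Fθ τ 0 0 0 1 0) := by ring
  rw [Pa4, Pb4, Pc4] at h_4
  clear Pa4 Pb4 Pc4
  have Pa5 := GH.masterP hτ 1 0 0 0 ((2:ℂ) • z) 0
  have Pb5 := GH.masterP hτ 1 0 0 0 ((2:ℂ) • z) ((2:ℂ) • z)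
  have Pc5 := GH.masterP hτ 1 0 0 0 (0 : Fin 2 → ℂ) 0
  simp only [add_zero, sub_zero, sub_self] at Pa5 Pb5 Pc5
  norm_num [GH.sg] at Pa5 Pb5 Pc5
  simp only [s22, s21, s12, s20, s02] at Pa5 Pb5 Pc5
  have h_5 : (GH.Fθ τ 1 0 0 0 ((2:ℂ) • z) * GH.Fθ τ 1 0 0 0 0)^2
      = (GH.Fθ τ 1 0 0 0 ((2:ℂ) • z) * GH.Fθ τ 1 0 0 0 ((2:ℂ) • z))
        * (GH.Fθ τ 1 0 0 0 0 * GH.Fθ τ 1 0 0 0 0) := by ring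
  rw [Pa5, Pb5, Pc5] at h_5
  clear Pa5 Pb5 Pc5
  have Pa6 := GH.masterP hτ 1 0 0 1 ((2:ℂ) • z) 0
  have Pb6 := GH.masterP hτ 1 0 0 1 ((2:ℂ) • z) ((2:ℂ) • z)
  have Pc6 := GH.masterP hτ 1 0 0 1 (0 : Fin 2 → ℂ) 0
  simp only [add_zero, sub_zero, sub_self] at Pa6 Pb6 Pc6
  norm_num [GH.sg] at Pa6 Pb6 Pc6
  simp only [s22, s21, s12, s20, s02] at Pa6 Pb6 Pc6
  have h_6 : (GH.Fθ τ 1 0 0 1 ((2:ℂ) • z) * GH.Fθ τ 1 0 0 1 0)^2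
      = (GH.Fθ τ 1 0 0 1 ((2:ℂ) • z) * GH.Fθ τ 1 0 0 1 ((2:ℂ) • z))
        * (GH.Fθ τ 1 0 0 1 0 * GH.Fθ τ 1 0 0 1 0) := by ring
  rw [Pa6, Pb6, Pc6] at h_6
  clear Pa6 Pb6 Pc6
  have Pa7 := GH.masterP hτ 0 1 0 0 ((2:ℂ) • z) 0
  have Pb7 := GH.masterP hτ 0 1 0 0 ((2:ℂ) • z) ((2:ℂ) • z)
  have Pc7 := GH.masterP hτ 0 1 0 0 (0 : Fin 2 → ℂ) 0
  simp only [add_zero, sub_zero, sub_self] at Pa7 Pb7 Pc7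
  norm_num [GH.sg] at Pa7 Pb7 Pc7
  simp only [s22, s21, s12, s20, s02] at Pa7 Pb7 Pc7
  have h_7 : (GH.Fθ τ 0 1 0 0 ((2:ℂ) • z) * GH.Fθ τ 0 1 0 0 0)^2
      = (GH.Fθ τ 0 1 0 0 ((2:ℂ) • z) * GH.Fθ τ 0 1 0 0 ((2:ℂ) • z))
        * (GH.Fθ τ 0 1 0 0 0 * GH.Fθ τ 0 1 0 0 0) := by ring
  rw [Pa7, Pb7, Pc7] at h_7
  clear Pa7 Pb7 Pc7
  have Pa8 := GH.masterP hτ 1 1 0 0 ((2:ℂ) • z) 0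
  have Pb8 := GH.masterP hτ 1 1 0 0 ((2:ℂ) • z) ((2:ℂ) • z)
  have Pc8 := GH.masterP hτ 1 1 0 0 (0 : Fin 2 → ℂ) 0
  simp only [add_zero, sub_zero, sub_self] at Pa8 Pb8 Pc8
  norm_num [GH.sg] at Pa8 Pb8 Pc8
  simp only [s22, s21, s12, s20, s02] at Pa8 Pb8 Pc8
  have h_8 : (GH.Fθ τ 1 1 0 0 ((2:ℂ) • z) * GH.Fθ τ 1 1 0 0 0)^2
      = (GH.Fθ τ 1 1 0 0 ((2:ℂ) • z) * GH.Fθ τ 1 1 0 0 ((2:ℂ) • z))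
        * (GH.Fθ τ 1 1 0 0 0 * GH.Fθ τ 1 1 0 0 0) := by ring
  rw [Pa8, Pb8, Pc8] at h_8
  clear Pa8 Pb8 Pc8
  have Pa9 := GH.masterP hτ 0 1 1 0 ((2:ℂ) • z) 0
  have Pb9 := GH.masterP hτ 0 1 1 0 ((2:ℂ) • z) ((2:ℂ) • z)
  have Pc9 := GH.masterP hτ 0 1 1 0 (0 : Fin 2 → ℂ) 0
  simp only [add_zero, sub_zero, sub_self] at Pa9 Pb9 Pc9
  norm_num [GH.sg] at Pa9 Pb9 Pc9
  simp only [s22, s21, s12, s20, s02] at Pa9 Pb9 Pc9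
  have h_9 : (GH.Fθ τ 0 1 1 0 ((2:ℂ) • z) * GH.Fθ τ 0 1 1 0 0)^2
      = (GH.Fθ τ 0 1 1 0 ((2:ℂ) • z) * GH.Fθ τ 0 1 1 0 ((2:ℂ) • z))
        * (GH.Fθ τ 0 1 1 0 0 * GH.Fθ τ 0 1 1 0 0) := by ring
  rw [Pa9, Pb9, Pc9] at h_9
  clear Pa9 Pb9 Pc9
  have Pa10 := GH.masterP hτ 1 1 1 1 ((2:ℂ) • z) 0
  have Pb10 := GH.masterP hτ 1 1 1 1 ((2:ℂ) • z) ((2:ℂ) • z)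
  have Pc10 := GH.masterP hτ 1 1 1 1 (0 : Fin 2 → ℂ) 0
  simp only [add_zero, sub_zero, sub_self] at Pa10 Pb10 Pc10
  norm_num [GH.sg] at Pa10 Pb10 Pc10
  simp only [s22, s21, s12, s20, s02] at Pa10 Pb10 Pc10
  have h_10 : (GH.Fθ τ 1 1 1 1 ((2:ℂ) • z) * GH.Fθ τ 1 1 1 1 0)^2
      = (GH.Fθ τ 1 1 1 1 ((2:ℂ) • z) * GH.Fθ τ 1 1 1 1 ((2:ℂ) • z))
        * (GH.Fθ τ 1 1 1 1 0 * GH.Fθ τ 1 1 1 1 0) := by ring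
  rw [Pa10, Pb10, Pc10] at h_10
  clear Pa10 Pb10 Pc10
  linear_combination (1/4)*h_1 + (1/4)*h_2 + (1/4)*h_3 + (1/4)*h_4
    - (C/8)*h_5 - (C/8)*h_6 - (A/8)*h_7 + ((D-B)/8)*h_8 - (A/8)*h_9 - ((D+B)/8)*h_10
    + (GH.Gθ τ 0 0 ((2:ℂ) • z + (2:ℂ) • z)/2)*hKW
    + (GH.Gθ τ 1 1 ((2:ℂ) • z + (2:ℂ) • z)/2)*hKX
    + (GH.Gθ τ 1 0 ((2:ℂ) • z + (2:ℂ) • z)/2)*hKY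
    + (GH.Gθ τ 0 1 ((2:ℂ) • z + (2:ℂ) • z)/2)*hKZ
end

section
/- Let Θ₁, Θ₂, Θ₃, Θ₄ be complex numbers, set t₁ = Θ₁²+Θ₂²+Θ₃²+Θ₄², t₂ = Θ₁²+Θ₂²−Θ₃²−Θ₄², t₃ = Θ₁²−Θ₂²−Θ₃²+Θ₄², t₄ = Θ₁²−Θ₂²+Θ₃²−Θ₄², t₈ = 2(Θ₁Θ₂+Θ₃Θ₄), t₁₀ = 2(Θ₁Θ₂−Θ₃Θ₄), and assume t₂, t₄, t₁₀ ≠ 0, Θ₁²Θ₂² − Θ₃²Θ₄² ≠ 0, Θ₁²Θ₃² − Θ₂²Θ₄² ≠ 0, Θ₁²Θ₄² − Θ₂²Θ₃² ≠ 0. Define the Rosenhain moduli λ₁ = t₁t₃/(t₂t₄), λ₂ = t₃t₈/(t₄t₁₀), λ₃ = t₁t₈/(t₂t₁₀), and assume λ₁ ≠ 1 and λ₂ ≠ λ₃. Define A = (Θ₁⁴ − Θ₂⁴ − Θ₃⁴ + Θ₄⁴)/(Θ₁²Θ₄² − Θ₂²Θ₃²), B = (Θ₁⁴ + Θ₂⁴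 − Θ₃⁴ − Θ₄⁴)/(Θ₁²Θ₂² − Θ₃²Θ₄²), C = (Θ₁⁴ − Θ₂⁴ + Θ₃⁴ − Θ₄⁴)/(Θ₁²Θ₃² − Θ₂²Θ₄²), D = Θ₁Θ₂Θ₃Θ₄·∏_{ε,ε'∈{±1}}(Θ₁² + εΘ₂² + ε'Θ₃² + εε'Θ₄²)/((Θ₁²Θ₂² − Θ₃²Θ₄²)(Θ₁²Θ₃² − Θ₂²Θ₄²)(Θ₁²Θ₄² − Θ₂²Θ₃²)). Then A = 2(λ₁+1)/(λ₁−1), B = 2(λ₁λ₂ + λ₁λ₃ − 2λ₂λ₃ − 2λ₁ + λ₂ + λ₃)/((λ₂−λ₃)(λ₁−1)), C = 2(λ₃+λ₂)/(λ₃−λ₂), and D = 4(λ₁ − λ₂λ₃)/((λ₂−λ₃)(λ₁−1)). -/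
/-- The Göpel–Hudson moduli A, B, C, D are rational functions of the Rosenhain moduli
λ₁, λ₂, λ₃. -/
theorem goepel_hudson_moduli_rational (T1 T2 T3 T4 : ℂ)
    (t1 t2 t3 t4 t8 t10 l1 l2 l3 A B C D : ℂ)
    (ht1 : t1 = T1 ^ 2 + T2 ^ 2 + T3 ^ 2 + T4 ^ 2)
    (ht2 : t2 = T1 ^ 2 + T2 ^ 2 - T3 ^ 2 - T4 ^ 2)
    (ht3 : t3 = T1 ^ 2 - T2 ^ 2 - T3 ^ 2 + T4 ^ 2)
    (ht4 : t4 = T1 ^ 2 - T2 ^ 2 + T3 ^ 2 - T4 ^ 2)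
    (ht8 : t8 = 2 * (T1 * T2 + T3 * T4))
    (ht10 : t10 = 2 * (T1 * T2 - T3 * T4))
    (h2 : t2 ≠ 0) (h4 : t4 ≠ 0) (h10 : t10 ≠ 0)
    (hd1 : T1 ^ 2 * T2 ^ 2 - T3 ^ 2 * T4 ^ 2 ≠ 0)
    (hd2 : T1 ^ 2 * T3 ^ 2 - T2 ^ 2 * T4 ^ 2 ≠ 0)
    (hd3 : T1 ^ 2 * T4 ^ 2 - T2 ^ 2 * T3 ^ 2 ≠ 0)
    (hl1 : l1 = t1 * t3 / (t2 * t4))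
    (hl2 : l2 = t3 * t8 / (t4 * t10))
    (hl3 : l3 = t1 * t8 / (t2 * t10))
    (hl1ne : l1 ≠ 1) (hl23 : l2 ≠ l3)
    (hA : A = (T1 ^ 4 - T2 ^ 4 - T3 ^ 4 + T4 ^ 4) / (T1 ^ 2 * T4 ^ 2 - T2 ^ 2 * T3 ^ 2))
    (hB : B = (T1 ^ 4 + T2 ^ 4 - T3 ^ 4 - T4 ^ 4) / (T1 ^ 2 * T2 ^ 2 - T3 ^ 2 * T4 ^ 2))
    (hC : C = (T1 ^ 4 - T2 ^ 4 + T3 ^ 4 - T4 ^ 4) / (T1 ^ 2 * T3 ^ 2 - T2 ^ 2 * T4 ^ 2))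
    (hD : D = T1 * T2 * T3 * T4 *
        ((T1 ^ 2 + T2 ^ 2 + T3 ^ 2 + T4 ^ 2) * (T1 ^ 2 + T2 ^ 2 - T3 ^ 2 - T4 ^ 2) *
         (T1 ^ 2 - T2 ^ 2 + T3 ^ 2 - T4 ^ 2) * (T1 ^ 2 - T2 ^ 2 - T3 ^ 2 + T4 ^ 2)) /
      ((T1 ^ 2 * T2 ^ 2 - T3 ^ 2 * T4 ^ 2) * (T1 ^ 2 * T3 ^ 2 - T2 ^ 2 * T4 ^ 2) *
       (T1 ^ 2 * T4 ^ 2 - T2 ^ 2 * T3 ^ 2))) :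
    A = 2 * (l1 + 1) / (l1 - 1) ∧
    B = 2 * (l1 * l2 + l1 * l3 - 2 * l2 * l3 - 2 * l1 + l2 + l3) / ((l2 - l3) * (l1 - 1)) ∧
    C = 2 * (l3 + l2) / (l3 - l2) ∧
    D = 4 * (l1 - l2 * l3) / ((l2 - l3) * (l1 - 1)) := by
  have h24 : t2 * t4 ≠ 0 := mul_ne_zero h2 h4
  have hN1 : t1 * t3 - t2 * t4 ≠ 0 := sub_ne_zero.mpr fun h => hl1ne (by rw [hl1, h, div_self h24])
  have ht8ne : t8 ≠ 0 := fun h => hl23 (by rw [hl2, hl3, h]; simp)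
  have hN2 : t2 * t3 - t1 * t4 ≠ 0 := sub_ne_zero.mpr fun h => hl23 (by
    rw [hl2, hl3, div_eq_div_iff (mul_ne_zero h4 h10) (mul_ne_zero h2 h10)]
    linear_combination t8 * t10 * h)
  have hN2' : t1 * t4 - t2 * t3 ≠ 0 := fun h => hN2 (by linear_combination -h)
  have p1 : l1 * (t2 * t4) = t1 * t3 := by rw [hl1]; field_simp
  have p2 : l2 * (t4 * t10) = t3 * t8 := by rw [hl2]; field_simp
  have p3 : l3 * (t2 * t10) = t1 * t8 := by rw [hl3]; field_simp
  have e1 : l1 - 1 = (t1 * t3 - t2 * t4) / (t2 * t4) := by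
    rw [hl1]; field_simp
  have e23 : l2 - l3 = t8 * (t2 * t3 - t1 * t4) / (t2 * t4 * t10) := by
    rw [hl2, hl3]; field_simp
  -- the four right-hand sides as single fractions in the t-variables
  have eA : 2 * (l1 + 1) / (l1 - 1) = 2 * (t1 * t3 + t2 * t4) / (t1 * t3 - t2 * t4) := by
    rw [hl1]; field_simp
  have eC : 2 * (l3 + l2) / (l3 - l2) = 2 * (t1 * t4 + t2 * t3) / (t1 * t4 - t2 * t3) := by
    rw [div_eq_div_iff (sub_ne_zero.mpr (Ne.symm hl23)) hN2', hl2, hl3]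
    field_simp
  have eN : (l1 * l2 + l1 * l3 - 2 * l2 * l3 - 2 * l1 + l2 + l3) * (t2 ^ 2 * t4 ^ 2 * t10 ^ 2) =
      t8 * (t1 * t3 ^ 2 * t2 * t10 + t1 ^ 2 * t3 * t4 * t10 - 2 * t1 * t3 * t8 * t2 * t4
        + t2 * t4 * t10 * (t2 * t3 + t1 * t4)) - 2 * t1 * t3 * t2 * t4 * t10 ^ 2 := by
    linear_combination (l2 * t4 * t10 * t2 * t10 + l3 * t2 * t10 * t4 * t10
        - 2 * t2 * t4 * t10 ^ 2) * p1
      + (t1 * t3 * t2 * t10 - 2 * l3 * t2 * t10 * t2 * t4 + t2 ^ 2 * t4 * t10) * p2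
      + (t1 * t3 * t4 * t10 - 2 * t3 * t8 * t2 * t4 + t2 * t4 ^ 2 * t10) * p3
  have eM : (l1 - l2 * l3) * (t2 * t4 * t10 ^ 2) = t1 * t3 * (t10 ^ 2 - t8 ^ 2) := by
    linear_combination t10 ^ 2 * p1 - (l3 * t2 * t10) * p2 - (t3 * t8) * p3
  have eB : 2 * (l1 * l2 + l1 * l3 - 2 * l2 * l3 - 2 * l1 + l2 + l3) / ((l2 - l3) * (l1 - 1)) =
      2 * (t8 * (t1 * t3 ^ 2 * t2 * t10 + t1 ^ 2 * t3 * t4 * t10 - 2 * t1 * t3 * t8 * t2 * t4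
        + t2 * t4 * t10 * (t2 * t3 + t1 * t4)) - 2 * t1 * t3 * t2 * t4 * t10 ^ 2)
      / (t10 * (t8 * (t2 * t3 - t1 * t4) * (t1 * t3 - t2 * t4))) := by
    rw [e23, e1, div_mul_div_comm, div_div_eq_mul_div,
      div_eq_div_iff (mul_ne_zero (mul_ne_zero ht8ne hN2) hN1)
        (mul_ne_zero h10 (mul_ne_zero (mul_ne_zero ht8ne hN2) hN1))]
    linear_combination (2 * (t8 * (t2 * t3 - t1 * t4) * (t1 * t3 - t2 * t4))) * eN
  have eD : 4 * (l1 - l2 * l3) / ((l2 - l3) * (l1 - 1)) =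
      4 * (t1 * t3 * (t10 ^ 2 - t8 ^ 2) * (t2 * t4))
      / (t10 * (t8 * (t2 * t3 - t1 * t4) * (t1 * t3 - t2 * t4))) := by
    rw [e23, e1, div_mul_div_comm, div_div_eq_mul_div,
      div_eq_div_iff (mul_ne_zero (mul_ne_zero ht8ne hN2) hN1)
        (mul_ne_zero h10 (mul_ne_zero (mul_ne_zero ht8ne hN2) hN1))]
    linear_combination (4 * t2 * t4 * (t8 * (t2 * t3 - t1 * t4) * (t1 * t3 - t2 * t4))) * eM
  have hdenne : t10 * (t8 * (t2 * t3 - t1 * t4) * (t1 * t3 - t2 * t4)) ≠ 0 :=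
    mul_ne_zero h10 (mul_ne_zero (mul_ne_zero ht8ne hN2) hN1)
  rw [eA, eB, eC, eD]
  subst ht1 ht2 ht3 ht4 ht8 ht10
  refine ⟨?_, ?_, ?_, ?_⟩
  · rw [hA, div_eq_div_iff hd3 hN1]; ring
  · rw [hB, div_eq_div_iff hd1 hdenne]; ring
  · rw [hC, div_eq_div_iff hd2 hN2']; ring
  · rw [hD, div_eq_div_iff (mul_ne_zero (mul_ne_zero hd1 hd2) hd3) hdenne]; ring
end

section
/- Let p₀, q₀, r₀, s₀, t₀, u₀ be complex numbers satisfying t₀²u₀² = p₀²q₀² − r₀²s₀² and t₀⁴ + u₀⁴ = p₀⁴ + q₀⁴ − r₀⁴ − s₀⁴, with p₀q₀r₀s₀t₀u₀ ≠ 0 and (p₀²r₀² − q₀²s₀²)(p₀²q₀² − r₀²s₀²)(p₀²s₀² − q₀²r₀²) ≠ 0. Suppose complex numbers w, x, y, z, X₁, X₂ satisfy the three quadrics: 2p₀q₀(X₁² + X₂²) = (p₀² + q₀²)(w² + x²) − (p₀² − q₀²)(y² + z²); 2r₀s₀(X₁² − X₂²) = (r₀² + s₀²)(w² − x²) + (r₀²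 − s₀²)(y² − z²); 4u₀t₀X₁X₂ = 2(t₀² + u₀²)wx − 2(t₀² − u₀²)yz. Then (w, x, y, z) satisfies the Göpel–Hudson quartic w⁴ + x⁴ + y⁴ + z⁴ + 2Dwxyz − A(w²z² + x²y²) − B(w²x² + y²z²) − C(w²y² + x²z²) = 0, where A = 2(p₀²r₀² + q₀²s₀²)/(p₀²r₀² − q₀²s₀²), B = 2(p₀²q₀² + r₀²s₀²)/(p₀²q₀² − r₀²s₀²), C = 2(p₀²s₀² + q₀²r₀²)/(p₀²s₀² − q₀²r₀²), and D = 4p₀²q₀²r₀²s₀²(t₀² − u₀²)(t₀² + u₀²)/((p₀²r₀² − q₀²s₀²)(p₀²q₀² − r₀²s₀²)(p₀²s₀² − q₀²r₀²)). -/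
/-- A point on the three quadrics of the Barth (1,2)-polarized Kummer variety projects to a
point of the Göpel–Hudson quartic. -/
theorem barth_projects_to_goepel_hudson (p0 q0 r0 s0 t0 u0 : ℂ)
    (hrel1 : t0 ^ 2 * u0 ^ 2 = p0 ^ 2 * q0 ^ 2 - r0 ^ 2 * s0 ^ 2)
    (hrel2 : t0 ^ 4 + u0 ^ 4 = p0 ^ 4 + q0 ^ 4 - r0 ^ 4 - s0 ^ 4)
    (hnz : p0 * q0 * r0 * s0 * t0 * u0 ≠ 0)
    (hden : (p0 ^ 2 * r0 ^ 2 - q0 ^ 2 * s0 ^ 2) * (p0 ^ 2 * q0 ^ 2 - r0 ^ 2 * s0 ^ 2) *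
      (p0 ^ 2 * s0 ^ 2 - q0 ^ 2 * r0 ^ 2) ≠ 0)
    (w x y z X1 X2 : ℂ)
    (hq1 : 2 * p0 * q0 * (X1 ^ 2 + X2 ^ 2) =
      (p0 ^ 2 + q0 ^ 2) * (w ^ 2 + x ^ 2) - (p0 ^ 2 - q0 ^ 2) * (y ^ 2 + z ^ 2))
    (hq2 : 2 * r0 * s0 * (X1 ^ 2 - X2 ^ 2) =
      (r0 ^ 2 + s0 ^ 2) * (w ^ 2 - x ^ 2) + (r0 ^ 2 - s0 ^ 2) * (y ^ 2 - z ^ 2))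
    (hq3 : 4 * u0 * t0 * X1 * X2 =
      2 * (t0 ^ 2 + u0 ^ 2) * w * x - 2 * (t0 ^ 2 - u0 ^ 2) * y * z)
    (A B C D : ℂ)
    (hA : A = 2 * (p0 ^ 2 * r0 ^ 2 + q0 ^ 2 * s0 ^ 2) / (p0 ^ 2 * r0 ^ 2 - q0 ^ 2 * s0 ^ 2))
    (hB : B = 2 * (p0 ^ 2 * q0 ^ 2 + r0 ^ 2 * s0 ^ 2) / (p0 ^ 2 * q0 ^ 2 - r0 ^ 2 * s0 ^ 2))
    (hC : C = 2 * (p0 ^ 2 * s0 ^ 2 + q0 ^ 2 * r0 ^ 2) / (p0 ^ 2 * s0 ^ 2 - q0 ^ 2 * r0 ^ 2))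
    (hD : D = 4 * (p0 ^ 2 * q0 ^ 2 * r0 ^ 2 * s0 ^ 2 * (t0 ^ 2 - u0 ^ 2) * (t0 ^ 2 + u0 ^ 2)) /
      ((p0 ^ 2 * r0 ^ 2 - q0 ^ 2 * s0 ^ 2) * (p0 ^ 2 * q0 ^ 2 - r0 ^ 2 * s0 ^ 2) *
       (p0 ^ 2 * s0 ^ 2 - q0 ^ 2 * r0 ^ 2))) :
    w ^ 4 + x ^ 4 + y ^ 4 + z ^ 4 + 2 * D * w * x * y * z
      - A * (w ^ 2 * z ^ 2 + x ^ 2 * y ^ 2) - B * (w ^ 2 * x ^ 2 + y ^ 2 * z ^ 2)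
      - C * (w ^ 2 * y ^ 2 + x ^ 2 * z ^ 2) = 0 := by
  have hE1 : p0 ^ 2 * r0 ^ 2 - q0 ^ 2 * s0 ^ 2 ≠ 0 := fun h => hden (by rw [h]; ring)
  have hE2 : p0 ^ 2 * q0 ^ 2 - r0 ^ 2 * s0 ^ 2 ≠ 0 := fun h => hden (by rw [h]; ring)
  have hE3 : p0 ^ 2 * s0 ^ 2 - q0 ^ 2 * r0 ^ 2 ≠ 0 := fun h => hden (by rw [h]; ring)
  have hA' : A * (p0 ^ 2 * r0 ^ 2 - q0 ^ 2 * s0 ^ 2) = 2 * (p0 ^ 2 * r0 ^ 2 + q0 ^ 2 * s0 ^ 2) := by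
    rw [hA, div_mul_cancel₀ _ hE1]
  have hB' : B * (p0 ^ 2 * q0 ^ 2 - r0 ^ 2 * s0 ^ 2) = 2 * (p0 ^ 2 * q0 ^ 2 + r0 ^ 2 * s0 ^ 2) := by
    rw [hB, div_mul_cancel₀ _ hE2]
  have hC' : C * (p0 ^ 2 * s0 ^ 2 - q0 ^ 2 * r0 ^ 2) = 2 * (p0 ^ 2 * s0 ^ 2 + q0 ^ 2 * r0 ^ 2) := by
    rw [hC, div_mul_cancel₀ _ hE3]
  have hD' : D * ((p0 ^ 2 * r0 ^ 2 - q0 ^ 2 * s0 ^ 2) * (p0 ^ 2 * q0 ^ 2 - r0 ^ 2 * s0 ^ 2) *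
      (p0 ^ 2 * s0 ^ 2 - q0 ^ 2 * r0 ^ 2)) =
      4 * (p0 ^ 2 * q0 ^ 2 * r0 ^ 2 * s0 ^ 2 * (t0 ^ 2 - u0 ^ 2) * (t0 ^ 2 + u0 ^ 2)) := by
    rw [hD, div_mul_cancel₀ _ hden]
  have hs1 : (2 * p0 * q0 * (X1 ^ 2 + X2 ^ 2)) ^ 2 =
      ((p0 ^ 2 + q0 ^ 2) * (w ^ 2 + x ^ 2) - (p0 ^ 2 - q0 ^ 2) * (y ^ 2 + z ^ 2)) ^ 2 := by
    rw [hq1]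
  have hs2 : (2 * r0 * s0 * (X1 ^ 2 - X2 ^ 2)) ^ 2 =
      ((r0 ^ 2 + s0 ^ 2) * (w ^ 2 - x ^ 2) + (r0 ^ 2 - s0 ^ 2) * (y ^ 2 - z ^ 2)) ^ 2 := by
    rw [hq2]
  have hs3 : (4 * u0 * t0 * X1 * X2) ^ 2 =
      (2 * (t0 ^ 2 + u0 ^ 2) * w * x - 2 * (t0 ^ 2 - u0 ^ 2) * y * z) ^ 2 := by
    rw [hq3]
  have h4 : (2 * r0 * s0) ^ 2 * (4 * u0 * t0) ^ 2 *
        ((p0 ^ 2 + q0 ^ 2) * (w ^ 2 + x ^ 2) - (p0 ^ 2 - q0 ^ 2) * (y ^ 2 + z ^ 2)) ^ 2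
      - (2 * p0 * q0) ^ 2 * (4 * u0 * t0) ^ 2 *
        ((r0 ^ 2 + s0 ^ 2) * (w ^ 2 - x ^ 2) + (r0 ^ 2 - s0 ^ 2) * (y ^ 2 - z ^ 2)) ^ 2
      - 4 * (2 * p0 * q0) ^ 2 * (2 * r0 * s0) ^ 2 *
        (2 * (t0 ^ 2 + u0 ^ 2) * w * x - 2 * (t0 ^ 2 - u0 ^ 2) * y * z) ^ 2 = 0 := by
    linear_combination (-(2 * r0 * s0) ^ 2 * (4 * u0 * t0) ^ 2) * hs1
      + ((2 * p0 * q0) ^ 2 * (4 * u0 * t0) ^ 2) * hs2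
      + (4 * (2 * p0 * q0) ^ 2 * (2 * r0 * s0) ^ 2) * hs3
  have hplus : (t0 ^ 2 + u0 ^ 2) ^ 2 = (p0 ^ 2 + q0 ^ 2) ^ 2 - (r0 ^ 2 + s0 ^ 2) ^ 2 := by
    linear_combination hrel2 + 2 * hrel1
  have hminus : (t0 ^ 2 - u0 ^ 2) ^ 2 = (p0 ^ 2 - q0 ^ 2) ^ 2 - (r0 ^ 2 - s0 ^ 2) ^ 2 := by
    linear_combination hrel2 - 2 * hrel1
  have key : ((p0 ^ 2 * r0 ^ 2 - q0 ^ 2 * s0 ^ 2) * (p0 ^ 2 * q0 ^ 2 - r0 ^ 2 * s0 ^ 2) *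
      (p0 ^ 2 * s0 ^ 2 - q0 ^ 2 * r0 ^ 2)) *
      (w ^ 4 + x ^ 4 + y ^ 4 + z ^ 4 + 2 * D * w * x * y * z
      - A * (w ^ 2 * z ^ 2 + x ^ 2 * y ^ 2) - B * (w ^ 2 * x ^ 2 + y ^ 2 * z ^ 2)
      - C * (w ^ 2 * y ^ 2 + x ^ 2 * z ^ 2)) = 0 := by
    linear_combination (2 * w * x * y * z) * hD'
      - ((w ^ 2 * z ^ 2 + x ^ 2 * y ^ 2) * (p0 ^ 2 * q0 ^ 2 - r0 ^ 2 * s0 ^ 2) *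
          (p0 ^ 2 * s0 ^ 2 - q0 ^ 2 * r0 ^ 2)) * hA'
      - ((w ^ 2 * x ^ 2 + y ^ 2 * z ^ 2) * (p0 ^ 2 * r0 ^ 2 - q0 ^ 2 * s0 ^ 2) *
          (p0 ^ 2 * s0 ^ 2 - q0 ^ 2 * r0 ^ 2)) * hB'
      - ((w ^ 2 * y ^ 2 + x ^ 2 * z ^ 2) * (p0 ^ 2 * r0 ^ 2 - q0 ^ 2 * s0 ^ 2) *
          (p0 ^ 2 * q0 ^ 2 - r0 ^ 2 * s0 ^ 2)) * hC'
      + (1 / 64 : ℂ) * h4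
      + (p0 ^ 2 * q0 ^ 2 * ((r0 ^ 2 + s0 ^ 2) * (w ^ 2 - x ^ 2) + (r0 ^ 2 - s0 ^ 2) * (y ^ 2 - z ^ 2)) ^ 2
        - r0 ^ 2 * s0 ^ 2 * ((p0 ^ 2 + q0 ^ 2) * (w ^ 2 + x ^ 2) - (p0 ^ 2 - q0 ^ 2) * (y ^ 2 + z ^ 2)) ^ 2) * hrel1
      + (4 * p0 ^ 2 * q0 ^ 2 * r0 ^ 2 * s0 ^ 2 * w ^ 2 * x ^ 2) * hplus
      + (4 * p0 ^ 2 * q0 ^ 2 * r0 ^ 2 * s0 ^ 2 * y ^ 2 * z ^ 2) * hminus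
  exact (mul_eq_zero.mp key).resolve_left hden
end
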